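/- arXiv:1901.06702 — 10 statements merged into one kernel-verified Lean document; each statement's English description precedes it below -/
import Mathlib

section
/- Let m, n, k be positive integers with k ≤ n. If T ⊆ {0,1}^{mn} is an (mn, mk)-universal set, then there exists an (n, k, 2^m)-universal set of the same cardinality. -/
/-- `T ⊆ {0,…,b-1}^n` is an `(n,k,b)`-universal set: for every index set `S` of
cardinality `k`, the projection of `T` onto `S` contains all configurations. -/
def IsUniversal {n b : ℕ} (k : ℕ) (T : Finset (Fin n → Fin b)) : Prop :=
  ∀ S : Finset (Fin n), S.card = k → ∀ f : Fin n → Fin b, ∃ x ∈ T, ∀ i ∈ S, x i = f i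

theorem stmt_1 (m n k : ℕ) (hm : 1 ≤ m) (hk : 1 ≤ k) (hkn : k ≤ n)
    (T : Finset (Fin (m * n) → Fin 2)) (hT : IsUniversal (m * k) T) :
    ∃ T' : Finset (Fin n → Fin (2 ^ m)), IsUniversal k T' ∧ T'.card = T.card := by
  classical
  let p : Fin n × Fin m ≃ Fin (m * n) := (Equiv.prodComm _ _).trans finProdFinEquiv
  let e : (Fin (m * n) → Fin 2) ≃ (Fin n → Fin (2 ^ m)) :=
    ((p.arrowCongr (Equiv.refl (Fin 2))).symm.trans (Equiv.curry _ _ _)).trans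
      (Equiv.arrowCongr (Equiv.refl _) finFunctionFinEquiv)
  have he : ∀ (x : Fin (m * n) → Fin 2) (i : Fin n),
      e x i = finFunctionFinEquiv (fun j => x (p (i, j))) := by
    intro x i
    rfl
  have hes : ∀ (f : Fin n → Fin (2 ^ m)) (i : Fin n) (j : Fin m),
      e.symm f (p (i, j)) = finFunctionFinEquiv.symm (f i) j := by
    intro f i j
    simp [e, Equiv.symm_apply_eq, he]
  refine ⟨T.image e, ?_, Finset.card_image_of_injective _ e.injective⟩
  intro S hS f
  have hS' : ((S ×ˢ (Finset.univ : Finset (Fin m))).image p).card = m * k := by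
    rw [Finset.card_image_of_injective _ p.injective, Finset.card_product, hS,
      Finset.card_univ, Fintype.card_fin, mul_comm]
  obtain ⟨x, hxT, hx⟩ := hT _ hS' (e.symm f)
  refine ⟨e x, Finset.mem_image_of_mem _ hxT, fun i hi => ?_⟩
  rw [he]
  have : (fun j => x (p (i, j))) = finFunctionFinEquiv.symm (f i) := by
    funext j
    rw [← hes f i j]
    exact hx _ (Finset.mem_image_of_mem _ (by simp [hi]))
  rw [this, Equiv.apply_symm_apply]
end

section
/- For positive integers 1 ≤ k ≤ n and b ≥ 2, there exists an (n,k,b)-universal set of size at most ⌈k b^k log(e b n / k)⌉. -/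
namespace Stmt2Aux

variable {n b : ℕ}

def Covers (x : Fin n → Fin b) (p : Finset (Fin n) × (Fin n → Fin b)) : Prop :=
  ∀ i ∈ p.1, x i = p.2 i

instance (x : Fin n → Fin b) (p : Finset (Fin n) × (Fin n → Fin b)) :
    Decidable (Covers x p) := by unfold Covers; infer_instance

lemma card_covers {k : ℕ} (p : Finset (Fin n) × (Fin n → Fin b)) (hp : p.1.card = k) :
    (Finset.univ.filter (fun x : Fin n → Fin b => Covers x p)).card = b ^ (n - k) := by
  have h1 : Finset.univ.filter (fun x : Fin n → Fin b => Covers x p)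
      = Fintype.piFinset (fun i => if i ∈ p.1 then ({p.2 i} : Finset (Fin b))
          else Finset.univ) := by
    ext x
    rw [Finset.mem_filter_univ]
    simp only [Finset.mem_filter, Finset.mem_univ, true_and, Fintype.mem_piFinset, Covers]
    constructor
    · intro h i
      by_cases hi : i ∈ p.1 <;> simp [hi, h i]
    · intro h i hi
      have := h i; simpa [hi] using this
  rw [h1, Fintype.card_piFinset]
  have h2 : ∀ i : Fin n,
      (if i ∈ p.1 then ({p.2 i} : Finset (Fin b)) else Finset.univ).card
        = if i ∈ p.1ᶜ then b else 1 := by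
    intro i; by_cases hi : i ∈ p.1 <;> simp [hi]
  rw [Finset.prod_congr rfl (fun i _ => h2 i), Finset.prod_ite_mem, Finset.univ_inter,
    Finset.prod_const, Finset.card_compl, Fintype.card_fin, hp]

lemma step (hb : 1 ≤ b) {k : ℕ} (hkn : k ≤ n)
    (U : Finset (Finset (Fin n) × (Fin n → Fin b))) (hU : ∀ p ∈ U, p.1.card = k) :
    ∃ x : Fin n → Fin b,
      b ^ k * (U.filter (fun p => ¬ Covers x p)).card ≤ (b ^ k - 1) * U.card := by
  haveI : NeZero b := ⟨by omega⟩
  have hsum : ∑ x : Fin n → Fin b, (U.filter (fun p => Covers x p)).card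
      = U.card * b ^ (n - k) := by
    simp only [Finset.card_filter]
    rw [Finset.sum_comm]
    rw [Finset.sum_congr rfl (fun p hp => ?_), Finset.sum_const, smul_eq_mul]
    rw [← card_covers p (hU p hp), Finset.card_filter]
  have htot : ∑ x : Fin n → Fin b, U.card * b ^ (n - k)
      ≤ ∑ x : Fin n → Fin b, b ^ n * (U.filter (fun p => Covers x p)).card := by
    have hr : ∑ x : Fin n → Fin b, b ^ n * (U.filter (fun p => Covers x p)).card
        = b ^ n * (U.card * b ^ (n - k)) := by rw [← Finset.mul_sum, hsum]
    have hl : ∑ x : Fin n → Fin b, U.card * b ^ (n - k)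
        = b ^ n * (U.card * b ^ (n - k)) := by
      rw [Finset.sum_const, Finset.card_univ, smul_eq_mul]
      simp [Fintype.card_fun]
    rw [hl, hr]
  obtain ⟨x, -, hx⟩ := Finset.exists_le_of_sum_le Finset.univ_nonempty htot
  refine ⟨x, ?_⟩
  set c := (U.filter (fun p => Covers x p)).card with hc
  have hbn : b ^ n = b ^ (n - k) * b ^ k := by
    rw [← pow_add]; congr 1; omega
  have hUc : U.card ≤ b ^ k * c := by
    have : b ^ (n - k) * U.card ≤ b ^ (n - k) * (b ^ k * c) := by
      calc b ^ (n - k) * U.card = U.card * b ^ (n - k) := by ring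
        _ ≤ b ^ n * c := hx
        _ = b ^ (n - k) * (b ^ k * c) := by rw [hbn]; ring
    exact Nat.le_of_mul_le_mul_left this (Nat.pow_pos (by omega))
  have hsplit : (U.filter (fun p => Covers x p)).card
      + (U.filter (fun p => ¬ Covers x p)).card = U.card :=
    Finset.card_filter_add_card_filter_not _
  set u := (U.filter (fun p => ¬ Covers x p)).card with hu
  have key : b ^ k * u + U.card ≤ b ^ k * U.card := by
    calc b ^ k * u + U.card ≤ b ^ k * u + b ^ k * c := by omega
      _ = b ^ k * (c + u) := by ring
      _ = b ^ k * U.card := by rw [hsplit]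
  rw [Nat.sub_mul, one_mul]
  exact Nat.le_sub_of_add_le key

lemma iterate (hb : 1 ≤ b) {k : ℕ} (hkn : k ≤ n)
    (E : Finset (Finset (Fin n) × (Fin n → Fin b))) (hE : ∀ p ∈ E, p.1.card = k) :
    ∀ m : ℕ, ∃ T : Finset (Fin n → Fin b), T.card ≤ m ∧
      b ^ (k * m) * (E.filter (fun p => ∀ x ∈ T, ¬ Covers x p)).card
        ≤ (b ^ k - 1) ^ m * E.card := by
  intro m
  induction m with
  | zero =>
    refine ⟨∅, le_refl _, ?_⟩
    rw [Finset.filter_true_of_mem (fun p _ => by simp)]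
    simp
  | succ m ih =>
    obtain ⟨T, hT, hcard⟩ := ih
    set U := E.filter (fun p => ∀ x ∈ T, ¬ Covers x p) with hUdef
    obtain ⟨x, hx⟩ := step hb hkn U (fun p hp => hE p (Finset.mem_filter.mp hp).1)
    refine ⟨insert x T, (Finset.card_insert_le _ _).trans (by omega), ?_⟩
    have hfe : E.filter (fun p => ∀ y ∈ insert x T, ¬ Covers y p)
        = U.filter (fun p => ¬ Covers x p) := by
      rw [hUdef, Finset.filter_filter]
      apply Finset.filter_congr
      intro p _
      simp only [Finset.mem_insert]
      constructor
      · intro h; exact ⟨fun y hy => h y (Or.inr hy), h x (Or.inl rfl)⟩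
      · rintro ⟨h1, h2⟩ y (rfl | hy); exact h2; exact h1 y hy
    rw [hfe]
    calc b ^ (k * (m + 1)) * (U.filter (fun p => ¬ Covers x p)).card
        = b ^ (k * m) * (b ^ k * (U.filter (fun p => ¬ Covers x p)).card) := by
          rw [← mul_assoc, ← pow_add]; ring_nf
      _ ≤ b ^ (k * m) * ((b ^ k - 1) * U.card) := Nat.mul_le_mul_left _ hx
      _ = (b ^ k - 1) * (b ^ (k * m) * U.card) := by ring
      _ ≤ (b ^ k - 1) * ((b ^ k - 1) ^ m * E.card) := Nat.mul_le_mul_left _ hcard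
      _ = (b ^ k - 1) ^ (m + 1) * E.card := by ring

lemma kk_lt (k : ℕ) (hk : 1 ≤ k) :
    (k : ℝ) ^ k < Real.exp 1 ^ k * (k.factorial : ℝ) := by
  rw [Real.exp_one_pow]
  have hsum := Real.sum_le_exp_of_nonneg (x := (k : ℝ)) (by positivity) (k + 1)
  have hterm : 1 + (k : ℝ) ^ k / (k.factorial : ℝ)
      ≤ ∑ i ∈ Finset.range (k + 1), (k : ℝ) ^ i / (i.factorial : ℝ) := by
    have hpair : ({0, k} : Finset ℕ) ⊆ Finset.range (k + 1) := by
      intro i hi; simp only [Finset.mem_insert, Finset.mem_singleton] at hi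
      rcases hi with rfl | rfl <;> simp [Nat.lt_succ_iff]
    have hps : ∑ i ∈ ({0, k} : Finset ℕ), (k : ℝ) ^ i / (i.factorial : ℝ)
        = 1 + (k : ℝ) ^ k / (k.factorial : ℝ) := by
      rw [Finset.sum_pair (by omega)]; simp
    rw [← hps]
    exact Finset.sum_le_sum_of_subset_of_nonneg hpair (fun i _ _ => by positivity)
  have hfac : (0 : ℝ) < (k.factorial : ℝ) := by positivity
  have h1 : (k : ℝ) ^ k / (k.factorial : ℝ) < Real.exp k := by
    nlinarith [hterm.trans hsum]
  calc (k : ℝ) ^ k = ((k : ℝ) ^ k / (k.factorial : ℝ)) * (k.factorial : ℝ) := by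
        field_simp
    _ < Real.exp k * (k.factorial : ℝ) := by
        exact mul_lt_mul_of_pos_right h1 hfac

lemma choose_lt (n k : ℕ) (hk : 1 ≤ k) (hkn : k ≤ n) :
    ((n.choose k : ℝ)) * (k : ℝ) ^ k < Real.exp 1 ^ k * (n : ℝ) ^ k := by
  have hn : 1 ≤ n := hk.trans hkn
  have hcf : (n.choose k : ℝ) * (k.factorial : ℝ) ≤ (n : ℝ) ^ k := by
    have : k.factorial * n.choose k ≤ n ^ k := by
      rw [← Nat.descFactorial_eq_factorial_mul_choose]
      exact Nat.descFactorial_le_pow n k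
    calc (n.choose k : ℝ) * (k.factorial : ℝ) = ((k.factorial * n.choose k : ℕ) : ℝ) := by
          push_cast; ring
      _ ≤ ((n ^ k : ℕ) : ℝ) := by exact_mod_cast this
      _ = (n : ℝ) ^ k := by push_cast; ring
  have hkk := kk_lt k hk
  have hfac : (0 : ℝ) < (k.factorial : ℝ) := by positivity
  have hnp : (0 : ℝ) < (n : ℝ) ^ k := by positivity
  have hch : (0 : ℝ) ≤ (n.choose k : ℝ) := by positivity
  have key : (n.choose k : ℝ) * (k : ℝ) ^ k * (k.factorial : ℝ)
      < Real.exp 1 ^ k * (n : ℝ) ^ k * (k.factorial : ℝ) := by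
    calc (n.choose k : ℝ) * (k : ℝ) ^ k * (k.factorial : ℝ)
        = ((n.choose k : ℝ) * (k.factorial : ℝ)) * (k : ℝ) ^ k := by ring
      _ ≤ (n : ℝ) ^ k * (k : ℝ) ^ k := by
          apply mul_le_mul_of_nonneg_right hcf (by positivity)
      _ < (n : ℝ) ^ k * (Real.exp 1 ^ k * (k.factorial : ℝ)) :=
          mul_lt_mul_of_pos_left hkk hnp
      _ = Real.exp 1 ^ k * (n : ℝ) ^ k * (k.factorial : ℝ) := by ring
  exact lt_of_mul_lt_mul_right key hfac.le

lemma analytic (n k b m : ℕ) (hk : 1 ≤ k) (hkn : k ≤ n) (hb : 2 ≤ b)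
    (hm : (k : ℝ) * (b : ℝ) ^ k
        * Real.log (Real.exp 1 * (b : ℝ) * (n : ℝ) / (k : ℝ)) ≤ (m : ℝ)) :
    (b ^ k - 1) ^ m * (n.choose k * b ^ k) < b ^ (k * m) := by
  have hn : 1 ≤ n := hk.trans hkn
  have hbk : 1 ≤ b ^ k := Nat.one_le_pow _ _ (by omega)
  set B : ℝ := (b : ℝ) ^ k with hB
  have hBpos : (0 : ℝ) < B := by positivity
  have hB1 : (1 : ℝ) ≤ B := one_le_pow₀ (by exact_mod_cast (by omega : 1 ≤ b))
  set M : ℝ := (n.choose k : ℝ) * B with hM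
  have hMpos : (0 : ℝ) < M := by
    apply mul_pos _ hBpos
    exact_mod_cast Nat.choose_pos hkn
  -- Step A : (B-1)^m ≤ B^m * exp (-(m/B))
  have hA : (B - 1) ^ m ≤ B ^ m * Real.exp (-((m : ℝ) / B)) := by
    have h1 : B - 1 ≤ B * Real.exp (-1 / B) := by
      have := Real.add_one_le_exp (-1 / B)
      have h2 : B * (-1 / B + 1) ≤ B * Real.exp (-1 / B) :=
        mul_le_mul_of_nonneg_left this hBpos.le
      calc B - 1 = B * (-1 / B + 1) := by field_simp; ring
        _ ≤ B * Real.exp (-1 / B) := h2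
    calc (B - 1) ^ m ≤ (B * Real.exp (-1 / B)) ^ m :=
          pow_le_pow_left₀ (by linarith) h1 m
      _ = B ^ m * Real.exp (-1 / B) ^ m := mul_pow _ _ _
      _ = B ^ m * Real.exp (-((m : ℝ) / B)) := by
          rw [← Real.exp_nat_mul]; congr 1; field_simp
  -- Step B : M < exp (m / B)
  have hkey : M < (Real.exp 1 * (b : ℝ) * (n : ℝ) / (k : ℝ)) ^ k := by
    have hkpos : (0 : ℝ) < (k : ℝ) := by exact_mod_cast hk
    rw [div_pow, lt_div_iff₀ (by positivity)]
    have := choose_lt n k hk hkn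
    calc M * (k : ℝ) ^ k = ((n.choose k : ℝ) * (k : ℝ) ^ k) * B := by rw [hM]; ring
      _ < (Real.exp 1 ^ k * (n : ℝ) ^ k) * B := mul_lt_mul_of_pos_right this hBpos
      _ = (Real.exp 1 * (b : ℝ) * (n : ℝ)) ^ k := by
          rw [mul_pow, mul_pow, hB]; ring
  have hlog : B * Real.log M < (m : ℝ) := by
    have hxpos : (0 : ℝ) < Real.exp 1 * (b : ℝ) * (n : ℝ) / (k : ℝ) := by positivity
    have h1 : Real.log M < (k : ℝ) * Real.log (Real.exp 1 * (b : ℝ) * (n : ℝ) / (k : ℝ)) := by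
      have := Real.log_lt_log hMpos hkey
      rw [Real.log_pow] at this; exact_mod_cast this
    calc B * Real.log M < B * ((k : ℝ) * Real.log (Real.exp 1 * (b : ℝ) * (n : ℝ) / (k : ℝ))) :=
          mul_lt_mul_of_pos_left h1 hBpos
      _ = (k : ℝ) * B * Real.log (Real.exp 1 * (b : ℝ) * (n : ℝ) / (k : ℝ)) := by ring
      _ ≤ (m : ℝ) := hm
  have hB2 : M < Real.exp ((m : ℝ) / B) := by
    have : Real.log M < (m : ℝ) / B := by
      rw [lt_div_iff₀ hBpos]; nlinarith [hlog]
    calc M = Real.exp (Real.log M) := (Real.exp_log hMpos).symm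
      _ < Real.exp ((m : ℝ) / B) := Real.exp_lt_exp.mpr this
  -- combine
  have hreal : (B - 1) ^ m * M < B ^ m := by
    calc (B - 1) ^ m * M ≤ (B ^ m * Real.exp (-((m : ℝ) / B))) * M :=
          mul_le_mul_of_nonneg_right hA hMpos.le
      _ < (B ^ m * Real.exp (-((m : ℝ) / B))) * Real.exp ((m : ℝ) / B) := by
          apply mul_lt_mul_of_pos_left hB2 (by positivity)
      _ = B ^ m := by
          rw [mul_assoc, ← Real.exp_add, neg_add_cancel, Real.exp_zero, mul_one]
  have hcast : (((b ^ k - 1) ^ m * (n.choose k * b ^ k) : ℕ) : ℝ) < ((b ^ (k * m) : ℕ) : ℝ) := by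
    push_cast [Nat.cast_sub hbk]
    calc ((b : ℝ) ^ k - 1) ^ m * ((n.choose k : ℝ) * (b : ℝ) ^ k)
        = (B - 1) ^ m * M := by rw [hB, hM]
      _ < B ^ m := hreal
      _ = (b : ℝ) ^ (k * m) := by rw [hB, ← pow_mul]
  exact_mod_cast hcast

end Stmt2Aux

open Stmt2Aux in
theorem stmt_2 (n k b : ℕ) (hk : 1 ≤ k) (hkn : k ≤ n) (hb : 2 ≤ b) :
    ∃ T : Finset (Fin n → Fin b), IsUniversal k T ∧
      T.card ≤ ⌈(k : ℝ) * (b : ℝ) ^ k *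
        Real.log (Real.exp 1 * (b : ℝ) * (n : ℝ) / (k : ℝ))⌉₊ := by
  haveI : NeZero b := ⟨by omega⟩
  set m := ⌈(k : ℝ) * (b : ℝ) ^ k *
    Real.log (Real.exp 1 * (b : ℝ) * (n : ℝ) / (k : ℝ))⌉₊ with hmdef
  set E : Finset (Finset (Fin n) × (Fin n → Fin b)) :=
    (Finset.univ.powersetCard k).biUnion
      (fun S => {S} ×ˢ Fintype.piFinset
        (fun i => if i ∈ S then (Finset.univ : Finset (Fin b)) else {0})) with hE
  have hfiber : ∀ S ∈ Finset.univ.powersetCard k,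
      ({S} ×ˢ Fintype.piFinset
        (fun i : Fin n => if i ∈ S then (Finset.univ : Finset (Fin b)) else {0})).card
      = b ^ k := by
    intro S hS
    rw [Finset.card_product, Finset.card_singleton, one_mul, Fintype.card_piFinset]
    have h2 : ∀ i : Fin n,
        (if i ∈ S then (Finset.univ : Finset (Fin b)) else {0}).card
          = if i ∈ S then b else 1 := by
      intro i; by_cases hi : i ∈ S <;> simp [hi]
    rw [Finset.prod_congr rfl (fun i _ => h2 i), Finset.prod_ite_mem, Finset.univ_inter,
      Finset.prod_const, (Finset.mem_powersetCard.mp hS).2]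
  have hEcard : E.card ≤ n.choose k * b ^ k := by
    calc E.card ≤ ∑ S ∈ Finset.univ.powersetCard k,
        ({S} ×ˢ Fintype.piFinset
          (fun i : Fin n => if i ∈ S then (Finset.univ : Finset (Fin b)) else {0})).card :=
          Finset.card_biUnion_le
      _ = ∑ S ∈ Finset.univ.powersetCard k, b ^ k := Finset.sum_congr rfl hfiber
      _ = (Finset.univ.powersetCard k).card * b ^ k := by
          rw [Finset.sum_const, smul_eq_mul]
      _ ≤ n.choose k * b ^ k := by
          rw [Finset.card_powersetCard]; simp
  have hEk : ∀ p ∈ E, p.1.card = k := by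
    intro p hp
    rw [hE, Finset.mem_biUnion] at hp
    obtain ⟨S, hS, hpS⟩ := hp
    rw [Finset.mem_product, Finset.mem_singleton] at hpS
    rw [hpS.1]
    exact (Finset.mem_powersetCard.mp hS).2
  obtain ⟨T, hT, hbound⟩ := iterate (by omega) hkn E hEk m
  have han := analytic n k b m hk hkn hb (Nat.le_ceil _)
  have hU0 : (E.filter (fun p => ∀ x ∈ T, ¬ Covers x p)).card = 0 := by
    by_contra h
    have h1 : 0 < (E.filter (fun p => ∀ x ∈ T, ¬ Covers x p)).card := Nat.pos_of_ne_zero h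
    have h2 : b ^ (k * m)
        ≤ b ^ (k * m) * (E.filter (fun p => ∀ x ∈ T, ¬ Covers x p)).card :=
      Nat.le_mul_of_pos_right _ h1
    have h3 : (b ^ k - 1) ^ m * E.card ≤ (b ^ k - 1) ^ m * (n.choose k * b ^ k) :=
      Nat.mul_le_mul_left _ hEcard
    exact absurd ((h2.trans hbound).trans_lt (h3.trans_lt han)) (lt_irrefl _)
  have hcov : ∀ p ∈ E, ∃ x ∈ T, Covers x p := by
    intro p hp
    by_contra h
    push_neg at h
    have hmem : p ∈ E.filter (fun p => ∀ x ∈ T, ¬ Covers x p) :=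
      Finset.mem_filter.mpr ⟨hp, h⟩
    rw [Finset.card_eq_zero.mp hU0] at hmem
    exact absurd hmem (Finset.notMem_empty _)
  refine ⟨T, ?_, hT⟩
  intro S hS f
  set p : Finset (Fin n) × (Fin n → Fin b) := (S, fun i => if i ∈ S then f i else 0) with hp
  have hpE : p ∈ E := by
    rw [hE, Finset.mem_biUnion]
    refine ⟨S, Finset.mem_powersetCard.mpr ⟨Finset.subset_univ _, hS⟩, ?_⟩
    rw [Finset.mem_product]
    refine ⟨by simp [hp], ?_⟩
    rw [Fintype.mem_piFinset]
    intro i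
    by_cases hi : i ∈ S <;> simp [hp, hi]
  obtain ⟨x, hxT, hxc⟩ := hcov p hpE
  refine ⟨x, hxT, fun i hi => ?_⟩
  have := hxc i hi
  simpa [hp, hi] using this
end

section
/- Let b, k, n, M, N be positive integers and let C = {C_1,...,C_M} with each C_j ⊆ {0,...,b-1}^k nonempty. Let c = min_j #C_j. If N > log(n^k · M) / log(b^k / (b^k - c)) (with c < b^k), then there exists a set T ⊆ {0,...,b-1}^n with #T = N satisfying the k-restriction problem with respect to C. -/
/-- The restriction of `x` to the index set `S` (of cardinality `k`), read as a vector of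
length `k` via the increasing enumeration of `S`. -/
def restrict {α : Type*} {n k : ℕ} (x : Fin n → α) (S : Finset (Fin n)) (h : S.card = k) :
    Fin k → α :=
  fun i => x (S.orderIsoOfFin h i).1

lemma restrict_invfun {b k n : ℕ} (S : Finset (Fin n)) (hS : S.card = k)
    (a : Fin k → Fin b) (g : {i : Fin n // i ∉ S} → Fin b) :
    restrict (fun i : Fin n => if h : i ∈ S then a ((S.orderIsoOfFin hS).symm ⟨i, h⟩)
      else g ⟨i, h⟩) S hS = a := by
  funext i
  show (if h : (S.orderIsoOfFin hS i).1 ∈ S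
    then a ((S.orderIsoOfFin hS).symm ⟨_, h⟩) else g ⟨_, h⟩) = a i
  rw [dif_pos (S.orderIsoOfFin hS i).2]
  exact congrArg a ((S.orderIsoOfFin hS).symm_apply_apply i)

/-- bijection for counting -/
def restrictEquiv {b k n : ℕ} (S : Finset (Fin n)) (hS : S.card = k)
    (A : Finset (Fin k → Fin b)) :
    {x : Fin n → Fin b // restrict x S hS ∈ A} ≃
      {a : Fin k → Fin b // a ∈ A} × ({i : Fin n // i ∉ S} → Fin b) where
  toFun x := ⟨⟨restrict x.1 S hS, x.2⟩, fun i => x.1 i.1⟩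
  invFun p := ⟨fun i => if h : i ∈ S then p.1.1 (((S.orderIsoOfFin hS).symm ⟨i, h⟩ : Fin k))
      else p.2 ⟨i, h⟩, by rw [restrict_invfun]; exact p.1.2⟩
  left_inv x := by
    apply Subtype.ext
    funext i
    by_cases h : i ∈ S
    · simp only [dif_pos h]
      show x.1 _ = x.1 i
      exact congrArg x.1 (congrArg Subtype.val
        ((S.orderIsoOfFin hS).apply_symm_apply ⟨i, h⟩))
    · simp only [dif_neg h]
  right_inv p := by
    refine Prod.ext (Subtype.ext ?_) ?_
    · exact restrict_invfun S hS p.1.1 p.2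
    · funext i
      exact dif_neg i.2

lemma card_restrict_mem {b k n : ℕ} (S : Finset (Fin n)) (hS : S.card = k)
    (A : Finset (Fin k → Fin b)) :
    (Finset.univ.filter (fun x : Fin n → Fin b => restrict x S hS ∈ A)).card
      = A.card * b ^ (n - k) := by
  rw [← Fintype.card_subtype, Fintype.card_congr (restrictEquiv S hS A),
    Fintype.card_prod, Fintype.card_fun, Fintype.card_coe, Fintype.card_subtype_compl,
    Fintype.card_coe, hS, Fintype.card_fin, Fintype.card_fin]

lemma nat_ineq (b k n M N c : ℕ) (hk : 1 ≤ k) (hkn : k ≤ n) (hM : 1 ≤ M)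
    (hc : 1 ≤ c) (hcb : c < b ^ k)
    (hNlarge : (N : ℝ) >
      Real.log ((n : ℝ) ^ k * (M : ℝ)) /
        Real.log ((b : ℝ) ^ k / ((b : ℝ) ^ k - (c : ℝ)))) :
    n.choose k * M * (b ^ k - c) ^ N < (b ^ k) ^ N := by
  have hn : 1 ≤ n := hk.trans hkn
  set B : ℝ := (b : ℝ) ^ k with hB
  have hcB : (c : ℝ) < B := by
    rw [hB]; exact_mod_cast hcb
  have hBc : (0 : ℝ) < B - c := by linarith
  have hBpos : (0 : ℝ) < B := lt_trans (by positivity) hcB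
  have hrat : (1 : ℝ) < B / (B - c) := by
    rw [lt_div_iff₀ hBc]
    have : (1 : ℝ) ≤ (c : ℝ) := by exact_mod_cast hc
    linarith
  have hlogpos : 0 < Real.log (B / (B - c)) := Real.log_pos hrat
  have h1 : Real.log ((n : ℝ) ^ k * M) < N * Real.log (B / (B - c)) := by
    rw [gt_iff_lt, div_lt_iff₀ hlogpos] at hNlarge
    exact hNlarge
  rw [Real.log_div (ne_of_gt hBpos) (ne_of_gt hBc)] at h1
  have hnM : (0 : ℝ) < (n : ℝ) ^ k * M := by
    have : (1:ℝ) ≤ (n:ℝ) := by exact_mod_cast hn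
    have : (1:ℝ) ≤ (M:ℝ) := by exact_mod_cast hM
    positivity
  have h2 : (n : ℝ) ^ k * M * (B - c) ^ N < B ^ N := by
    have hlt : Real.log ((n : ℝ) ^ k * M * (B - c) ^ N) < Real.log (B ^ N) := by
      rw [Real.log_mul (ne_of_gt hnM) (by positivity), Real.log_pow, Real.log_pow]
      nlinarith
    have := Real.exp_log hnM
    rw [Real.log_lt_log_iff (by positivity) (by positivity)] at hlt
    exact hlt
  have hcast : ((n.choose k * M * (b ^ k - c) ^ N : ℕ) : ℝ) < (((b ^ k) ^ N : ℕ) : ℝ) := by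
    push_cast [Nat.cast_sub hcb.le]
    calc (n.choose k : ℝ) * M * (B - c) ^ N
        ≤ (n : ℝ) ^ k * M * (B - c) ^ N := by
          have h3 : (n.choose k : ℝ) ≤ (n : ℝ) ^ k := by
            exact_mod_cast Nat.choose_le_pow n k
          have h4 : (0:ℝ) ≤ (B - c) ^ N := by positivity
          have hM0 : (0:ℝ) ≤ (M:ℝ) := by positivity
          exact mul_le_mul_of_nonneg_right (mul_le_mul_of_nonneg_right h3 hM0) h4
      _ < B ^ N := h2
  exact_mod_cast hcast

theorem stmt_3 (b k n M N : ℕ) (hb : 1 ≤ b) (hk : 1 ≤ k) (hkn : k ≤ n) (hM : 1 ≤ M)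
    (hN : 1 ≤ N) (C : Fin M → Finset (Fin k → Fin b)) (hCne : ∀ j, (C j).Nonempty)
    (c : ℕ) (hc₁ : ∀ j, c ≤ (C j).card) (hc₂ : ∃ j, (C j).card = c) (hcb : c < b ^ k)
    (hNlarge : (N : ℝ) >
      Real.log ((n : ℝ) ^ k * (M : ℝ)) /
        Real.log ((b : ℝ) ^ k / ((b : ℝ) ^ k - (c : ℝ)))) :
    ∃ T : Finset (Fin n → Fin b), T.card ≤ N ∧
      ∀ S : Finset (Fin n), ∀ hS : S.card = k, ∀ j : Fin M,
        ∃ x ∈ T, restrict x S hS ∈ C j := by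
  classical
  have hc : 1 ≤ c := by
    obtain ⟨j, hj⟩ := hc₂
    rw [← hj]
    exact Finset.card_pos.2 (hCne j)
  -- the key counting inequality
  have key : n.choose k * M * (b ^ k - c) ^ N < (b ^ k) ^ N :=
    nat_ineq b k n M N c hk hkn hM hc hcb hNlarge
  -- bad tuples
  set Bad : Finset (Fin N → Fin n → Fin b) :=
    Finset.univ.filter (fun ω => ∃ S : Finset (Fin n), ∃ hS : S.card = k, ∃ j : Fin M,
      ∀ i, restrict (ω i) S hS ∉ C j) with hBad
  -- per-(S,j) bad sets
  have hsub : Bad ⊆ (Finset.univ.powersetCard k).biUnion (fun S =>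
      Finset.univ.biUnion (fun j : Fin M =>
        Finset.univ.filter (fun ω : Fin N → Fin n → Fin b =>
          ∀ hS : S.card = k, ∀ i, restrict (ω i) S hS ∉ C j))) := by
    intro ω hω
    rw [hBad, Finset.mem_filter] at hω
    obtain ⟨-, S, hS, j, hj⟩ := hω
    rw [Finset.mem_biUnion]
    refine ⟨S, ?_, ?_⟩
    · rw [Finset.mem_powersetCard]
      exact ⟨Finset.subset_univ S, hS⟩
    · rw [Finset.mem_biUnion]
      exact ⟨j, Finset.mem_univ j, Finset.mem_filter.2 ⟨Finset.mem_univ ω,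
        fun _ i => hj i⟩⟩
  have hcount : ∀ S : Finset (Fin n), S.card = k → ∀ j : Fin M,
      (Finset.univ.filter (fun ω : Fin N → Fin n → Fin b =>
        ∀ hS : S.card = k, ∀ i, restrict (ω i) S hS ∉ C j)).card
        ≤ (b ^ n - c * b ^ (n - k)) ^ N := by
    intro S hS j
    set badX : Finset (Fin n → Fin b) :=
      Finset.univ.filter (fun x => restrict x S hS ∉ C j) with hbadX
    have hpi : (Finset.univ.filter (fun ω : Fin N → Fin n → Fin b =>
        ∀ hS : S.card = k, ∀ i, restrict (ω i) S hS ∉ C j))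
        ⊆ Fintype.piFinset (fun _ : Fin N => badX) := by
      intro ω hω
      rw [Finset.mem_filter] at hω
      rw [Fintype.mem_piFinset]
      intro i
      rw [hbadX, Finset.mem_filter]
      exact ⟨Finset.mem_univ _, hω.2 hS i⟩
    refine le_trans (Finset.card_le_card hpi) ?_
    rw [Fintype.card_piFinset]
    rw [Finset.prod_const, Finset.card_univ, Fintype.card_fin]
    apply Nat.pow_le_pow_left
    -- badX.card ≤ b^n - c * b^(n-k)
    have hmem := card_restrict_mem S hS (C j)
    have huniv : (Finset.univ : Finset (Fin n → Fin b)).card = b ^ n := by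
      rw [Finset.card_univ, Fintype.card_fun, Fintype.card_fin, Fintype.card_fin]
    have hsplit : (C j).card * b ^ (n - k) + badX.card = b ^ n := by
      rw [hbadX, ← hmem, ← huniv]
      exact Finset.card_filter_add_card_filter_not
        (p := fun x => restrict x S hS ∈ C j)
    have : badX.card = b ^ n - (C j).card * b ^ (n - k) := by omega
    rw [this]
    exact Nat.sub_le_sub_left (Nat.mul_le_mul_right _ (hc₁ j)) _
  -- bound on Bad.card
  have hBadcard : Bad.card ≤ n.choose k * M * (b ^ n - c * b ^ (n - k)) ^ N := by
    refine le_trans (Finset.card_le_card hsub) ?_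
    refine le_trans (Finset.card_biUnion_le) ?_
    calc ∑ S ∈ Finset.univ.powersetCard k, ((Finset.univ.biUnion (fun j : Fin M =>
          Finset.univ.filter (fun ω : Fin N → Fin n → Fin b =>
            ∀ hS : S.card = k, ∀ i, restrict (ω i) S hS ∉ C j))).card)
        ≤ ∑ S ∈ Finset.univ.powersetCard k, M * (b ^ n - c * b ^ (n - k)) ^ N := by
          refine Finset.sum_le_sum ?_
          intro S hSmem
          rw [Finset.mem_powersetCard] at hSmem
          refine le_trans (Finset.card_biUnion_le) ?_
          calc ∑ j : Fin M, (Finset.univ.filter (fun ω : Fin N → Fin n → Fin b =>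
                ∀ hS : S.card = k, ∀ i, restrict (ω i) S hS ∉ C j)).card
              ≤ ∑ _j : Fin M, (b ^ n - c * b ^ (n - k)) ^ N :=
                Finset.sum_le_sum (fun j _ => hcount S hSmem.2 j)
            _ = M * (b ^ n - c * b ^ (n - k)) ^ N := by
                rw [Finset.sum_const, Finset.card_univ, Fintype.card_fin, smul_eq_mul]
      _ = n.choose k * M * (b ^ n - c * b ^ (n - k)) ^ N := by
          rw [Finset.sum_const, Finset.card_powersetCard, Finset.card_univ,
            Fintype.card_fin, smul_eq_mul, mul_assoc]
  -- total count
  have hfactor : b ^ n - c * b ^ (n - k) = b ^ (n - k) * (b ^ k - c) := by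
    have hbn : b ^ n = b ^ (n - k) * b ^ k := by
      rw [← pow_add, Nat.sub_add_cancel hkn]
    rw [hbn, Nat.mul_sub, mul_comm c (b ^ (n-k))]
  have hlt : Bad.card < (Finset.univ : Finset (Fin N → Fin n → Fin b)).card := by
    refine lt_of_le_of_lt hBadcard ?_
    rw [hfactor, mul_pow, Finset.card_univ, Fintype.card_fun, Fintype.card_fun,
      Fintype.card_fin, Fintype.card_fin, Fintype.card_fin]
    have hbn : b ^ n = b ^ (n - k) * b ^ k := by
      rw [← pow_add, Nat.sub_add_cancel hkn]
    rw [hbn, mul_pow]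
    have hpos : 0 < (b ^ (n - k)) ^ N := by positivity
    calc n.choose k * M * ((b ^ (n - k)) ^ N * (b ^ k - c) ^ N)
        = (b ^ (n - k)) ^ N * (n.choose k * M * (b ^ k - c) ^ N) := by ring
      _ < (b ^ (n - k)) ^ N * (b ^ k) ^ N :=
          Nat.mul_lt_mul_of_le_of_lt (le_refl _) key hpos
  -- extract a good tuple
  obtain ⟨ω, hω⟩ : ∃ ω : Fin N → Fin n → Fin b, ω ∉ Bad := by
    by_contra h
    push_neg at h
    have : (Finset.univ : Finset (Fin N → Fin n → Fin b)) ⊆ Bad := fun ω _ => h ω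
    exact absurd (Finset.card_le_card this) (not_le.2 hlt)
  have hgood : ∀ S : Finset (Fin n), ∀ hS : S.card = k, ∀ j : Fin M,
      ∃ i : Fin N, restrict (ω i) S hS ∈ C j := by
    intro S hS j
    rw [hBad, Finset.mem_filter] at hω
    push_neg at hω
    have := hω (Finset.mem_univ ω) S hS j
    obtain ⟨i, hi⟩ := this
    exact ⟨i, hi⟩
  refine ⟨Finset.image ω Finset.univ, ?_, ?_⟩
  · refine le_trans Finset.card_image_le ?_
    rw [Finset.card_univ, Fintype.card_fin]
  · intro S hS j
    obtain ⟨i, hi⟩ := hgood S hS j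
    exact ⟨ω i, Finset.mem_image_of_mem ω (Finset.mem_univ i), hi⟩
end

section
/- Let n, k, L be positive integers and let c_1,...,c_n ∈ {1,...,k^2}^L be codewords of a code with pairwise normalized Hamming distance at least 1 - 2/k^2 (i.e., any two distinct codewords agree on at most 2L/k^2 coordinates). Then the family H = {h_j : j = 1,...,L}, where h_j(i) = c_i(j), is an (n,k,k^2)-splitter; in particular, for every S ⊆ {1,...,n} with #S = k there is a coordinate j such that the codewords {c_i : i ∈ S} are pairwise distinct in coordinate j. -/
/-- Codewords `c 1,…,c n ∈ {1,…,k²}^L` with pairwise normalized Hamming distance at least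
`1 - 2/k²` (distinct codewords agree on at most `2L/k²` coordinates) give rise to an
`(n,k,k²)`-splitter `h_j : i ↦ c i j`: for every `S` of size `k` some coordinate `j`
separates all codewords indexed by `S`, i.e. `i ↦ c i j` is injective on `S`. -/
theorem stmt_6 (n k L : ℕ) (hn : 1 ≤ n) (hk : 1 ≤ k) (hL : 1 ≤ L)
    (c : Fin n → Fin L → Fin (k ^ 2))
    (hdist : ∀ i i' : Fin n, i ≠ i' →
      (Finset.univ.filter (fun j : Fin L => c i j = c i' j)).card * k ^ 2 ≤ 2 * L) :
    ∀ S : Finset (Fin n), S.card = k →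
      ∃ j : Fin L, ∀ i ∈ S, ∀ i' ∈ S, i ≠ i' → c i j ≠ c i' j := by
  intro S hS
  by_contra h
  push_neg at h
  set T := S.offDiag with hT
  have hTcard : T.card = k * k - k := by
    rw [hT, Finset.offDiag_card, hS]
  have key : ∀ j : Fin L, 2 ≤ (T.filter (fun p => c p.1 j = c p.2 j)).card := by
    intro j
    obtain ⟨i, hi, i', hi', hne, heq⟩ := h j
    have h1 : (i, i') ∈ T.filter (fun p => c p.1 j = c p.2 j) := by
      simp [hT, Finset.mem_offDiag, hi, hi', hne, heq]
    have h2 : (i', i) ∈ T.filter (fun p => c p.1 j = c p.2 j) := by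
      simp [hT, Finset.mem_offDiag, hi, hi', hne.symm, heq.symm]
    calc 2 = ({(i, i'), (i', i)} : Finset (Fin n × Fin n)).card := by
            rw [Finset.card_pair]
            simp [Prod.ext_iff]
            intro habs; exact absurd habs hne
      _ ≤ _ := Finset.card_le_card (by
            intro p hp
            simp only [Finset.mem_insert, Finset.mem_singleton] at hp
            rcases hp with h' | h' <;> subst h' <;> assumption)
  have sum_eq : ∑ p ∈ T, (Finset.univ.filter (fun j : Fin L => c p.1 j = c p.2 j)).card
      = ∑ j : Fin L, (T.filter (fun p => c p.1 j = c p.2 j)).card := by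
    simp_rw [Finset.card_filter]
    rw [Finset.sum_comm]
  have lower : 2 * L ≤ ∑ p ∈ T, (Finset.univ.filter (fun j : Fin L => c p.1 j = c p.2 j)).card := by
    rw [sum_eq]
    calc 2 * L = ∑ _j : Fin L, 2 := by simp [mul_comm]
      _ ≤ _ := Finset.sum_le_sum (fun j _ => key j)
  have upper : (∑ p ∈ T, (Finset.univ.filter (fun j : Fin L => c p.1 j = c p.2 j)).card) * k ^ 2
      ≤ (k * k - k) * (2 * L) := by
    rw [Finset.sum_mul]
    calc ∑ p ∈ T, (Finset.univ.filter (fun j : Fin L => c p.1 j = c p.2 j)).card * k ^ 2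
        ≤ ∑ _p ∈ T, 2 * L := Finset.sum_le_sum (fun p hp => by
            rw [hT, Finset.mem_offDiag] at hp
            exact hdist p.1 p.2 hp.2.2)
      _ = T.card * (2 * L) := by rw [Finset.sum_const, smul_eq_mul]
      _ = (k * k - k) * (2 * L) := by rw [hTcard]
  have final : 2 * L * k ^ 2 ≤ (k * k - k) * (2 * L) :=
    le_trans (Nat.mul_le_mul_right _ lower) upper
  have hkk : k * k - k < k ^ 2 := by
    have : k ≤ k * k := Nat.le_mul_of_pos_left k hk
    nlinarith [Nat.sub_lt (by nlinarith : 0 < k * k) hk]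
  nlinarith [Nat.sub_le (k * k) k]
end

section
/- Let m ≥ 2 and d ≥ 1 be integers, and let B = I_1 × ... × I_d ⊆ [0,1]^d be an axis-parallel box with volume greater than 2^{-m}. Then the number of indices j ∈ {1,...,d} such that M_m ⊄ I_j is at most m·2^m, where M_m = {1/2^m, 2/2^m, ..., (2^m - 1)/2^m}. -/
/-- The grid `M_m = {i/2^m : 1 ≤ i ≤ 2^m - 1} ⊆ (0,1)`. -/
def Mgrid (m : ℕ) : Set ℝ := {x | ∃ i : ℕ, 1 ≤ i ∧ i ≤ 2 ^ m - 1 ∧ x = (i : ℝ) / 2 ^ m}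

/-- If `B = I_1 × ⋯ × I_d ⊆ [0,1]^d` is an axis-parallel box (each `I_j` an interval with
endpoints `a j ≤ b j`) of volume `> 2^{-m}`, then the number of indices `j` with
`M_m ⊄ I_j` is at most `m·2^m`. -/
theorem stmt_7 (m d : ℕ) (hm : 2 ≤ m) (hd : 1 ≤ d)
    (a b : Fin d → ℝ) (I : Fin d → Set ℝ)
    (hab : ∀ j, 0 ≤ a j ∧ a j ≤ b j ∧ b j ≤ 1)
    (hI : ∀ j, Set.Ioo (a j) (b j) ⊆ I j ∧ I j ⊆ Set.Icc (a j) (b j))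
    (hvol : ((2 : ℝ) ^ m)⁻¹ < ∏ j, (b j - a j)) :
    Set.ncard {j : Fin d | ¬ Mgrid m ⊆ I j} ≤ m * 2 ^ m := by
  set t : ℝ := ((2 : ℝ) ^ m)⁻¹ with ht
  have hT : (0:ℝ) < (2:ℝ)^m := by positivity
  have ht0 : 0 < t := by positivity
  have ht1 : t < 1 := by
    rw [ht, inv_lt_one_iff₀]
    right
    exact one_lt_pow₀ (by norm_num) (by omega)
  -- each bad coordinate has length ≤ 1 - t
  have key : ∀ j : Fin d, ¬ Mgrid m ⊆ I j → b j - a j ≤ 1 - t := by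
    intro j hj
    obtain ⟨p, hpM, hpI⟩ := Set.not_subset.mp hj
    obtain ⟨i, hi1, hi2, rfl⟩ := hpM
    have hi2' : (i : ℝ) ≤ 2 ^ m - 1 := by
      have h1 : (1:ℕ) ≤ 2 ^ m := Nat.one_le_two_pow
      have := (Nat.cast_le (α := ℝ)).mpr hi2
      push_cast [h1] at this
      linarith
    have hp_le : (i : ℝ) / 2 ^ m ≤ 1 - t := by
      rw [ht, div_le_iff₀ hT]
      have : (1 - ((2:ℝ)^m)⁻¹) * 2 ^ m = 2 ^ m - 1 := by
        field_simp
      rw [this]; exact hi2'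
    have hp_ge : t ≤ (i : ℝ) / 2 ^ m := by
      rw [ht, inv_eq_one_div, div_le_div_iff_of_pos_right hT]
      exact_mod_cast hi1
    have hnotIoo : (i : ℝ) / 2 ^ m ∉ Set.Ioo (a j) (b j) := fun h => hpI ((hI j).1 h)
    rw [Set.mem_Ioo, not_and_or, not_lt, not_lt] at hnotIoo
    obtain ⟨ha0, hab', hb1⟩ := hab j
    rcases hnotIoo with h | h
    · linarith
    · linarith
  -- pass to the finset of bad coordinates
  classical
  set S : Finset (Fin d) := Finset.univ.filter (fun j => ¬ Mgrid m ⊆ I j) with hS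
  have hset : {j : Fin d | ¬ Mgrid m ⊆ I j} = ↑S := by
    ext j; simp [hS]
  rw [hset, Set.ncard_coe_finset]
  by_contra hcon
  push_neg at hcon
  have hk : m * 2 ^ m ≤ S.card := Nat.le_of_lt hcon
  have hfac0 : ∀ j : Fin d, 0 ≤ b j - a j := fun j => by
    have := (hab j).2.1; linarith
  have hfac1 : ∀ j : Fin d, b j - a j ≤ 1 := fun j => by
    obtain ⟨h0, h1, h2⟩ := hab j; linarith
  have h1 : ∏ j, (b j - a j) ≤ (1 - t) ^ S.card := by
    calc ∏ j, (b j - a j)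
        = (∏ j ∈ S, (b j - a j)) * ∏ j ∈ Finset.univ.filter (fun j => ¬¬ Mgrid m ⊆ I j), (b j - a j) := by
          rw [← Finset.prod_filter_mul_prod_filter_not Finset.univ (fun j => ¬ Mgrid m ⊆ I j)]
      _ ≤ (1 - t) ^ S.card * 1 := by
          apply mul_le_mul
          · rw [← Finset.prod_const]
            exact Finset.prod_le_prod (fun j _ => hfac0 j)
              (fun j hj => key j (by simpa [hS] using hj))
          · exact Finset.prod_le_one (fun j _ => hfac0 j) (fun j _ => hfac1 j)
          · exact Finset.prod_nonneg (fun j _ => hfac0 j)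
          · exact pow_nonneg (by linarith) _
      _ = (1 - t) ^ S.card := mul_one _
  have h2 : (1 - t) ^ S.card ≤ (1 - t) ^ (m * 2 ^ m) :=
    pow_le_pow_of_le_one (by linarith) (by linarith) hk
  have h3 : (1 - t) ^ (m * 2 ^ m) ≤ Real.exp (-m) := by
    have : (1 - t) ≤ Real.exp (-t) := by
      have := Real.add_one_le_exp (-t); linarith
    calc (1 - t) ^ (m * 2 ^ m) ≤ Real.exp (-t) ^ (m * 2 ^ m) :=
          pow_le_pow_left₀ (by linarith) this _
      _ = Real.exp (-m) := by
          rw [← Real.exp_nat_mul]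
          congr 1
          rw [ht]
          push_cast
          field_simp
  have h4 : Real.exp (-(m:ℝ)) < t := by
    rw [ht, Real.exp_neg]
    apply inv_strictAnti₀ hT
    calc (2:ℝ) ^ m < Real.exp 1 ^ m := by
          apply pow_lt_pow_left₀ _ (by norm_num) (by omega)
          have := Real.exp_one_gt_d9; linarith
      _ = Real.exp m := by rw [← Real.exp_nat_mul]; ring_nf
  linarith
end

section
/- Let m ≥ 2, d ≥ 1, set A_m = min(m·2^m, d) and M_m = {1/2^m,...,(2^m-1)/2^m}. Suppose P ⊆ M_m^d is a point set such that for every A ⊆ {1,...,d} with #A = A_m and every z ∈ M_m^{A_m}, there exists x ∈ P with x|_A = z. Then the dispersion of P is at most 2^{-m}, i.e., every axis-parallel box B ⊆ [0,1]^d with B ∩ P = ∅ has volume at most 2^{-m}. -/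
/-- If `P ⊆ M_m^d` hits every configuration prescribed on every index set of cardinality
`A_m = min(m·2^m, d)`, then every axis-parallel box `B = I_1 × ⋯ × I_d ⊆ [0,1]^d`
disjoint from `P` has volume at most `2^{-m}`, i.e. `disp(P) ≤ 2^{-m}`. -/
theorem stmt_9 (m d : ℕ) (hm : 2 ≤ m) (hd : 1 ≤ d)
    (P : Finset (Fin d → ℝ)) (hP : ∀ x ∈ P, ∀ j, x j ∈ Mgrid m)
    (hcond : ∀ A : Finset (Fin d), A.card = min (m * 2 ^ m) d →
      ∀ z : Fin d → ℝ, (∀ j, z j ∈ Mgrid m) → ∃ x ∈ P, ∀ j ∈ A, x j = z j) :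
    ∀ (a b : Fin d → ℝ) (I : Fin d → Set ℝ),
      (∀ j, 0 ≤ a j ∧ a j ≤ b j ∧ b j ≤ 1) →
      (∀ j, Set.Ioo (a j) (b j) ⊆ I j ∧ I j ⊆ Set.Icc (a j) (b j)) →
      (∀ x ∈ P, ∃ j, x j ∉ I j) →
      ∏ j, (b j - a j) ≤ ((2 : ℝ) ^ m)⁻¹ := by
  classical
  intro a b I hab hI hdisj
  by_contra hlt
  push_neg at hlt
  set ε : ℝ := ((2 : ℝ) ^ m)⁻¹ with hεdef
  have hpow : (0 : ℝ) < (2 : ℝ) ^ m := by positivity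
  have h4 : (4 : ℝ) ≤ (2 : ℝ) ^ m := by
    calc (4 : ℝ) = 2 ^ 2 := by norm_num
    _ ≤ (2 : ℝ) ^ m := by
      apply pow_le_pow_right₀ (by norm_num) hm
  have hεpos : 0 < ε := by positivity
  have hε1 : ε ≤ 1 := by
    rw [hεdef]
    rw [inv_le_one_iff₀]
    right; linarith
  have hnn : ∀ j, 0 ≤ b j - a j := fun j => sub_nonneg.2 (hab j).2.1
  have hle1 : ∀ j, b j - a j ≤ 1 := fun j => by
    have h1 := (hab j).1; have h2 := (hab j).2.2; linarith
  -- each side length exceeds ε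
  have hlen : ∀ j, ε < b j - a j := by
    intro j
    calc ε < ∏ k, (b k - a k) := hlt
    _ ≤ b j - a j := by
      rw [← Finset.prod_erase_mul _ _ (Finset.mem_univ j)]
      have h1 : ∏ k ∈ Finset.univ.erase j, (b k - a k) ≤ 1 :=
        Finset.prod_le_one (fun k _ => hnn k) (fun k _ => hle1 k)
      have h2 : 0 ≤ ∏ k ∈ Finset.univ.erase j, (b k - a k) :=
        Finset.prod_nonneg (fun k _ => hnn k)
      nlinarith [hnn j]
  -- every interval contains a grid point in its interior
  have hz : ∀ j, ∃ y, y ∈ Mgrid m ∧ y ∈ Set.Ioo (a j) (b j) := by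
    intro j
    obtain ⟨h0a, hab', hb1⟩ := hab j
    set i : ℕ := ⌊(2 : ℝ) ^ m * a j⌋₊ + 1 with hidef
    have h1 : (2 : ℝ) ^ m * a j < (i : ℝ) := by
      have := Nat.lt_floor_add_one ((2 : ℝ) ^ m * a j)
      rw [hidef]; push_cast; linarith
    have hfl : (⌊(2 : ℝ) ^ m * a j⌋₊ : ℝ) ≤ (2 : ℝ) ^ m * a j :=
      Nat.floor_le (by positivity)
    have hone : (1 : ℝ) < (2 : ℝ) ^ m * (b j - a j) := by
      have := mul_lt_mul_of_pos_left (hlen j) hpow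
      have heq : (2 : ℝ) ^ m * ε = 1 := by
        rw [hεdef]; field_simp
      linarith
    have h2 : (i : ℝ) < (2 : ℝ) ^ m * b j := by
      push_cast
      have hi : (i : ℝ) = (⌊(2 : ℝ) ^ m * a j⌋₊ : ℝ) + 1 := by rw [hidef]; push_cast; ring
      nlinarith
    have hilt : i < 2 ^ m := by
      have hicast : (i : ℝ) < ((2 ^ m : ℕ) : ℝ) := by
        push_cast
        nlinarith
      exact_mod_cast hicast
    refine ⟨(i : ℝ) / 2 ^ m, ⟨i, by omega, by omega, rfl⟩, ?_, ?_⟩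
    · rw [lt_div_iff₀ hpow]; linarith
    · rw [div_lt_iff₀ hpow]; linarith
  choose z hz1 hz2 using hz
  -- active coordinates
  set A : Finset (Fin d) :=
    Finset.univ.filter (fun j => ¬ (Mgrid m ⊆ Set.Ioo (a j) (b j))) with hAdef
  have hAbound : ∀ j ∈ A, b j - a j ≤ 1 - ε := by
    intro j hj
    rw [hAdef, Finset.mem_filter] at hj
    rw [Set.not_subset] at hj
    obtain ⟨_, y, hy, hynot⟩ := hj
    obtain ⟨i, hi1, hi2, rfl⟩ := hy
    have hilt : i < 2 ^ m := by omega
    have hipos : ε ≤ (i : ℝ) / 2 ^ m := by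
      rw [hεdef, inv_eq_one_div, div_le_div_iff_of_pos_right hpow]
      exact_mod_cast hi1
    have hile : (i : ℝ) / 2 ^ m ≤ 1 - ε := by
      rw [hεdef, div_le_iff₀ hpow]
      have : (i : ℝ) ≤ (2 : ℝ) ^ m - 1 := by
        have h1 : (1:ℕ) ≤ 2 ^ m := Nat.one_le_two_pow
        have hc : ((2 ^ m - 1 : ℕ) : ℝ) = 2 ^ m - 1 := by
          push_cast [Nat.cast_sub h1]
          ring
        rw [← hc]
        exact_mod_cast hi2
      have h2 : (1 - ((2 : ℝ) ^ m)⁻¹) * 2 ^ m = 2 ^ m - 1 := by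
        field_simp
      linarith
    rw [Set.mem_Ioo, not_and_or, not_lt, not_lt] at hynot
    have hb1 := (hab j).2.2
    have h0a := (hab j).1
    rcases hynot with h | h
    · linarith
    · linarith
  -- Bernoulli: (1-ε)^(2^m) ≤ 1/2
  have hber : ((1 : ℝ) - ε) ^ (2 ^ m) ≤ 1 / 2 := by
    set n : ℝ := (2 : ℝ) ^ m with hn
    have hn1 : (1 : ℝ) < n - 1 := by rw [hn]; linarith
    have hx : (0 : ℝ) < 1 / (n - 1) := by positivity
    have hber0 : (2 : ℝ) ≤ (1 + 1 / (n - 1)) ^ (2 ^ m) := by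
      have h1 := one_add_mul_le_pow (a := 1 / (n - 1)) (by linarith) (2 ^ m)
      have hc : ((2 ^ m : ℕ) : ℝ) = n := by rw [hn]; push_cast; ring
      rw [hc] at h1
      have h2 : (1 : ℝ) ≤ n * (1 / (n - 1)) := by
        rw [mul_one_div, le_div_iff₀ (by linarith)]
        linarith
      linarith
    have hprod : ((1 : ℝ) - ε) * (1 + 1 / (n - 1)) = 1 := by
      have : (1 : ℝ) - ε = (n - 1) / n := by
        rw [hεdef, hn]; field_simp
      rw [this]
      field_simp
      ring
    have hprodpow : ((1 : ℝ) - ε) ^ (2 ^ m) * (1 + 1 / (n - 1)) ^ (2 ^ m) = 1 := by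
      rw [← mul_pow, hprod, one_pow]
    have hpos2 : (0 : ℝ) < (1 + 1 / (n - 1)) ^ (2 ^ m) := by positivity
    have hX0 : (0 : ℝ) ≤ ((1 : ℝ) - ε) ^ (2 ^ m) := pow_nonneg (by linarith) _
    nlinarith [hX0, hber0, hprodpow]
  have h1ε0 : (0 : ℝ) ≤ 1 - ε := by linarith
  have h1ε1 : (1 : ℝ) - ε ≤ 1 := by linarith
  have hpowm : ((1 : ℝ) - ε) ^ (m * 2 ^ m) ≤ ε := by
    rw [mul_comm, pow_mul]
    calc (((1 : ℝ) - ε) ^ (2 ^ m)) ^ m ≤ (1 / 2) ^ m := by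
          apply pow_le_pow_left₀ (by positivity) hber
    _ = ε := by rw [hεdef, one_div, inv_pow]
  -- card bound
  have hcard : A.card < m * 2 ^ m := by
    by_contra hge
    push_neg at hge
    have h1 : ∏ j, (b j - a j) ≤ ∏ j ∈ A, (b j - a j) := by
      rw [← Finset.prod_mul_prod_compl A fun j => b j - a j]
      have hc1 : ∏ j ∈ Aᶜ, (b j - a j) ≤ 1 :=
        Finset.prod_le_one (fun k _ => hnn k) (fun k _ => hle1 k)
      have hc0 : 0 ≤ ∏ j ∈ A, (b j - a j) :=
        Finset.prod_nonneg (fun k _ => hnn k)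
      nlinarith [Finset.prod_nonneg (fun k (_ : k ∈ Aᶜ) => hnn k)]
    have h2 : ∏ j ∈ A, (b j - a j) ≤ (1 - ε) ^ A.card := by
      calc ∏ j ∈ A, (b j - a j) ≤ ∏ _j ∈ A, (1 - ε) :=
            Finset.prod_le_prod (fun k _ => hnn k) hAbound
      _ = (1 - ε) ^ A.card := by rw [Finset.prod_const]
    have h3 : ((1 : ℝ) - ε) ^ A.card ≤ (1 - ε) ^ (m * 2 ^ m) :=
      pow_le_pow_of_le_one h1ε0 h1ε1 hge
    linarith
  have hcardmin : A.card ≤ min (m * 2 ^ m) d := by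
    refine le_min (by omega) ?_
    have := Finset.card_le_univ A
    simpa using this
  obtain ⟨A', hAA', hA'card⟩ := Finset.exists_superset_card_eq hcardmin (by simp)
  obtain ⟨x, hxP, hx⟩ := hcond A' hA'card z hz1
  obtain ⟨j, hj⟩ := hdisj x hxP
  apply hj
  by_cases hjA : j ∈ A'
  · rw [hx j hjA]
    exact (hI j).1 (hz2 j)
  · have hjA2 : j ∉ A := fun h => hjA (hAA' h)
    rw [hAdef, Finset.mem_filter, not_and, not_not] at hjA2
    exact (hI j).1 (hjA2 (Finset.mem_univ j) (hP x hxP j))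
end

section
/- Let m ≥ 2, d ≥ 2. If T ⊆ {1,...,2^m - 1}^d satisfies condition (S) of order m, then the point set P = 2^{-m}·T ⊆ M_m^d ⊆ [0,1]^d satisfies disp(P) ≤ 2^{-m}. -/
/-- If `T ⊆ {1,…,2^m-1}^d` satisfies condition (S) of order `m` (projections onto every
index set of size `A_m = min(m·2^m, d)` attain all values in `{1,…,2^m-1}^{A_m}`), then
`P = 2^{-m}·T ⊆ [0,1]^d` has dispersion at most `2^{-m}`: every axis-parallel box in
`[0,1]^d` disjoint from `P` has volume at most `2^{-m}`. -/
theorem stmt_11 (m d : ℕ) (hm : 2 ≤ m) (hd : 2 ≤ d)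
    (T : Finset (Fin d → ℕ)) (hT : ∀ x ∈ T, ∀ i, 1 ≤ x i ∧ x i ≤ 2 ^ m - 1)
    (hS : ∀ A : Finset (Fin d), A.card = min (m * 2 ^ m) d →
      ∀ z : Fin d → ℕ, (∀ i, 1 ≤ z i ∧ z i ≤ 2 ^ m - 1) →
        ∃ x ∈ T, ∀ i ∈ A, x i = z i) :
    ∀ (a b : Fin d → ℝ) (I : Fin d → Set ℝ),
      (∀ j, 0 ≤ a j ∧ a j ≤ b j ∧ b j ≤ 1) →
      (∀ j, Set.Ioo (a j) (b j) ⊆ I j ∧ I j ⊆ Set.Icc (a j) (b j)) →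
      (∀ x ∈ T.image (fun x (i : Fin d) => (x i : ℝ) / 2 ^ m), ∃ j, x j ∉ I j) →
      ∏ j, (b j - a j) ≤ ((2 : ℝ) ^ m)⁻¹ := by
  intro a b I hab hI hP
  set ε : ℝ := ((2 : ℝ) ^ m)⁻¹ with hεdef
  have h2pos : (0 : ℝ) < 2 ^ m := by positivity
  have hεpos : 0 < ε := by positivity
  have hεhalf : ε ≤ 1 / 2 := by
    rw [hεdef]
    rw [inv_le_comm₀ h2pos (by norm_num)]
    calc ((1:ℝ)/2)⁻¹ = 2 := by norm_num
    _ ≤ 2 ^ m := by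
      calc (2:ℝ) = 2^1 := by norm_num
      _ ≤ 2^m := by apply pow_le_pow_right₀ (by norm_num); omega
  have hnn : ∀ j, 0 ≤ b j - a j := fun j => by
    have h := hab j; linarith [h.1, h.2.1]
  have hle1 : ∀ j, b j - a j ≤ 1 := fun j => by
    have h := hab j; linarith [h.1, h.2.2]
  by_cases hsmall : ∃ j, b j - a j ≤ ε
  · obtain ⟨j, hj⟩ := hsmall
    calc ∏ i, (b i - a i) = (b j - a j) * ∏ i ∈ Finset.univ.erase j, (b i - a i) :=
          (Finset.mul_prod_erase _ _ (Finset.mem_univ j)).symm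
    _ ≤ ε * 1 := by
        apply mul_le_mul hj (Finset.prod_le_one (fun i _ => hnn i) (fun i _ => hle1 i))
          (Finset.prod_nonneg fun i _ => hnn i) (le_of_lt hεpos)
    _ = ε := mul_one ε
  push_neg at hsmall
  -- Key inequality: (1-ε)^(m*2^m) ≤ ε
  have h1ε0 : (0:ℝ) ≤ 1 - ε := by linarith
  have hkey : (1 - ε) ^ (m * 2 ^ m) ≤ ε := by
    have hn : ((2 ^ m : ℕ) : ℝ) = 2 ^ m := by push_cast; ring
    have hbern : (2 : ℝ) ≤ (1 + ε) ^ (2 ^ m : ℕ) := by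
      have := one_add_mul_le_pow (a := ε) (by linarith) (2 ^ m : ℕ)
      have hne : ((2 ^ m : ℕ) : ℝ) * ε = 1 := by
        rw [hn, hεdef]; field_simp
      linarith
    have hprod : (1 - ε) ^ (2 ^ m : ℕ) * (1 + ε) ^ (2 ^ m : ℕ) ≤ 1 := by
      rw [← mul_pow]
      have : (1 - ε) * (1 + ε) = 1 - ε ^ 2 := by ring
      rw [this]
      apply pow_le_one₀ (by nlinarith) (by nlinarith)
    have hhalf : (1 - ε) ^ (2 ^ m : ℕ) ≤ 1 / 2 := by
      have hp : (0:ℝ) ≤ (1 - ε) ^ (2 ^ m : ℕ) := pow_nonneg h1ε0 _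
      nlinarith
    calc (1 - ε) ^ (m * 2 ^ m) = ((1 - ε) ^ (2 ^ m : ℕ)) ^ m := by
          rw [← pow_mul, mul_comm]
    _ ≤ (1 / 2) ^ m := pow_le_pow_left₀ (pow_nonneg h1ε0 _) hhalf m
    _ = ε := by rw [hεdef, div_pow, one_pow, one_div]
  classical
  set S : Finset (Fin d) := Finset.univ.filter (fun j => b j - a j ≤ 1 - ε) with hSdef
  by_cases hbig : m * 2 ^ m ≤ S.card
  · -- many small coordinates: product already ≤ ε
    calc ∏ j, (b j - a j) = (∏ j ∈ S, (b j - a j)) * ∏ j ∈ Finset.univ \ S, (b j - a j) := by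
          rw [mul_comm, Finset.prod_sdiff (Finset.subset_univ S)]
    _ ≤ (∏ j ∈ S, (b j - a j)) * 1 := by
        apply mul_le_mul_of_nonneg_left
          (Finset.prod_le_one (fun i _ => hnn i) (fun i _ => hle1 i))
          (Finset.prod_nonneg fun i _ => hnn i)
    _ = ∏ j ∈ S, (b j - a j) := mul_one _
    _ ≤ ∏ j ∈ S, (1 - ε) := by
        apply Finset.prod_le_prod (fun i _ => hnn i)
        intro i hi
        exact (Finset.mem_filter.mp hi).2
    _ = (1 - ε) ^ S.card := Finset.prod_const _
    _ ≤ (1 - ε) ^ (m * 2 ^ m) := pow_le_pow_of_le_one h1ε0 (by linarith) hbig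
    _ ≤ ε := hkey
  · -- few small coordinates: derive a contradiction with hP
    exfalso
    push_neg at hbig
    have hcard_univ : (Finset.univ : Finset (Fin d)).card = d := by simp
    have hSle : S.card ≤ min (m * 2 ^ m) d := by
      refine le_min (le_of_lt hbig) ?_
      calc S.card ≤ (Finset.univ : Finset (Fin d)).card := Finset.card_le_card (Finset.subset_univ S)
      _ = d := hcard_univ
    obtain ⟨A, hSA, _, hAcard⟩ := Finset.exists_subsuperset_card_eq (Finset.subset_univ S)
      hSle (by rw [hcard_univ]; exact min_le_right _ _)
    -- construct grid point z
    set z : Fin d → ℕ := fun j => ⌊a j * 2 ^ m⌋₊ + 1 with hzdef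
    have hz_lt : ∀ j, a j < (z j : ℝ) / 2 ^ m := by
      intro j
      rw [lt_div_iff₀ h2pos]
      have := Nat.lt_floor_add_one (a j * 2 ^ m)
      simp only [hzdef]
      push_cast
      linarith
    have hz_gt : ∀ j, (z j : ℝ) / 2 ^ m < b j := by
      intro j
      rw [div_lt_iff₀ h2pos]
      have h1 : (⌊a j * 2 ^ m⌋₊ : ℝ) ≤ a j * 2 ^ m :=
        Nat.floor_le (by have := (hab j).1; positivity)
      have h2 : ε < b j - a j := hsmall j
      have h3 : ε * 2 ^ m = 1 := by rw [hεdef]; field_simp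
      simp only [hzdef]
      push_cast
      nlinarith
    have hz_bound : ∀ i, 1 ≤ z i ∧ z i ≤ 2 ^ m - 1 := by
      intro i
      constructor
      · simp [hzdef]
      · have h1 : (z i : ℝ) < 2 ^ m := by
          have hg := hz_gt i
          rw [div_lt_iff₀ h2pos] at hg
          have hb := (hab i).2.2
          nlinarith
        have h2 : z i < 2 ^ m := by
          by_contra hcon
          push_neg at hcon
          have : (2:ℝ) ^ m ≤ (z i : ℝ) := by exact_mod_cast hcon
          linarith
        omega
    obtain ⟨x, hxT, hxA⟩ := hS A hAcard z hz_bound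
    have hmem : (fun i : Fin d => (x i : ℝ) / 2 ^ m) ∈
        T.image (fun x (i : Fin d) => (x i : ℝ) / 2 ^ m) :=
      Finset.mem_image_of_mem _ hxT
    obtain ⟨j, hj⟩ := hP _ hmem
    apply hj
    apply (hI j).1
    by_cases hjA : j ∈ A
    · rw [hxA j hjA]
      exact ⟨hz_lt j, hz_gt j⟩
    · have hjS : j ∉ S := fun h => hjA (hSA h)
      have hjbig : 1 - ε < b j - a j := by
        by_contra h
        exact hjS (Finset.mem_filter.mpr ⟨Finset.mem_univ j, by linarith⟩)
      have haj : a j < ε := by have := (hab j).2.2; linarith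
      have hbj : 1 - ε < b j := by have := (hab j).1; linarith
      have hx1 : (1 : ℝ) ≤ x j := by exact_mod_cast (hT x hxT j).1
      have hx2 : (x j : ℝ) ≤ 2 ^ m - 1 := by
        have h := (hT x hxT j).2
        have h' : x j + 1 ≤ 2 ^ m := by
          have : 1 ≤ 2 ^ m := Nat.one_le_two_pow
          omega
        have : ((x j : ℕ) : ℝ) + 1 ≤ ((2 ^ m : ℕ) : ℝ) := by exact_mod_cast h'
        push_cast at this
        linarith
      constructor
      · calc a j < ε := haj
        _ = 1 / 2 ^ m := by rw [hεdef, one_div]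
        _ ≤ (x j : ℝ) / 2 ^ m := by gcongr
      · calc (x j : ℝ) / 2 ^ m ≤ (2 ^ m - 1) / 2 ^ m := by gcongr
        _ = 1 - ε := by rw [hεdef]; field_simp
        _ < b j := hbj
end

section
/- Let m ≥ 2, d ≥ 2, A_m = min(m·2^m, d), and let N be a positive integer with binom(d, A_m) · (2^m - 1)^{A_m} · (1 - (2^m - 1)^{-A_m})^N < 1. Then there exists a set T ⊆ {1,...,2^m - 1}^d of cardinality at most N satisfying condition (S) of order m. -/
open Finset

/-- Counting functions `Fin d → Fin q` that agree with `z` on `A`. -/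
lemma stmt_12_card_fix {d q : ℕ} (A : Finset (Fin d)) (z : Fin d → Fin q) :
    (univ.filter (fun g : Fin d → Fin q => ∀ i ∈ A, g i = z i)).card = q ^ (d - A.card) := by
  have h : univ.filter (fun g : Fin d → Fin q => ∀ i ∈ A, g i = z i)
      = Fintype.piFinset (fun i => if i ∈ A then {z i} else univ) := by
    ext g
    simp only [mem_filter, Fintype.mem_piFinset, mem_univ, true_and]
    constructor
    · intro h i
      by_cases hi : i ∈ A <;> simp [hi, h i]
    · intro h i hi
      have := h i; simpa [hi] using this
  rw [h, Fintype.card_piFinset]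
  have h2 : ∀ i : Fin d, (if i ∈ A then ({z i} : Finset (Fin q)) else univ).card
      = if i ∈ A then 1 else q := by
    intro i; by_cases hi : i ∈ A <;> simp [hi]
  rw [Finset.prod_congr rfl (fun i _ => h2 i)]
  have h3 : ∀ i : Fin d, (if i ∈ A then 1 else q) = (if i ∈ Aᶜ then q else 1) := by
    intro i; by_cases hi : i ∈ A <;> simp [hi]
  rw [Finset.prod_congr rfl (fun i _ => h3 i), Finset.prod_ite_mem, univ_inter,
    Finset.prod_const, card_compl, Fintype.card_fin]

/-- Counting functions `Fin d → Fin q` that disagree with `z` somewhere on `A`. -/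
lemma stmt_12_card_miss {d q : ℕ} (A : Finset (Fin d)) (z : Fin d → Fin q) :
    (univ.filter (fun g : Fin d → Fin q => ∃ i ∈ A, g i ≠ z i)).card
      = q ^ d - q ^ (d - A.card) := by
  have h : (univ.filter (fun g : Fin d → Fin q => ∃ i ∈ A, g i ≠ z i))
      = univ \ (univ.filter (fun g : Fin d → Fin q => ∀ i ∈ A, g i = z i)) := by
    rw [← Finset.filter_not]
    apply Finset.filter_congr
    intro g _
    push_neg
    rfl
  rw [h, Finset.card_sdiff_of_subset (Finset.filter_subset _ _), stmt_12_card_fix, card_univ]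
  simp [Fintype.card_fun]

/-- Counting `N`-tuples all of whose entries disagree with `z` somewhere on `A`. -/
lemma stmt_12_card_bad {d q N : ℕ} (A : Finset (Fin d)) (z : Fin d → Fin q) :
    (univ.filter (fun f : Fin N → Fin d → Fin q => ∀ j, ∃ i ∈ A, f j i ≠ z i)).card
      = (q ^ d - q ^ (d - A.card)) ^ N := by
  have h : (univ.filter (fun f : Fin N → Fin d → Fin q => ∀ j, ∃ i ∈ A, f j i ≠ z i))
      = Fintype.piFinset (fun _ : Fin N =>
          univ.filter (fun g : Fin d → Fin q => ∃ i ∈ A, g i ≠ z i)) := by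
    ext f
    simp [Fintype.mem_piFinset]
  rw [h, Fintype.card_piFinset]
  simp only [stmt_12_card_miss A z, Finset.prod_const, card_univ, Fintype.card_fin]

/-- Counting the patterns supported on `A`. -/
lemma stmt_12_card_patterns {d q : ℕ} [NeZero q] (A : Finset (Fin d)) :
    (Fintype.piFinset (fun i : Fin d => if i ∈ A then (univ : Finset (Fin q)) else {0})).card
      = q ^ A.card := by
  rw [Fintype.card_piFinset]
  have h2 : ∀ i : Fin d, (if i ∈ A then (univ : Finset (Fin q)) else {0}).card
      = if i ∈ A then q else 1 := by
    intro i; by_cases hi : i ∈ A <;> simp [hi]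
  rw [Finset.prod_congr rfl (fun i _ => h2 i), Finset.prod_ite_mem, univ_inter,
    Finset.prod_const]

/-- Union bound for the set of bad `N`-tuples. -/
lemma stmt_12_union_bound {d q N a : ℕ} [NeZero q] :
    (univ.filter (fun f : Fin N → Fin d → Fin q =>
      ¬ ∀ A : Finset (Fin d), A.card = a → ∀ z : Fin d → Fin q,
        ∃ j, ∀ i ∈ A, f j i = z i)).card
      ≤ d.choose a * (q ^ a * (q ^ d - q ^ (d - a)) ^ N) := by
  classical
  have hsub : (univ.filter (fun f : Fin N → Fin d → Fin q =>
      ¬ ∀ A : Finset (Fin d), A.card = a → ∀ z : Fin d → Fin q,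
        ∃ j, ∀ i ∈ A, f j i = z i))
      ⊆ (univ.powersetCard a).biUnion (fun A =>
          (Fintype.piFinset (fun i : Fin d => if i ∈ A then (univ : Finset (Fin q)) else {0})).biUnion
            (fun z => univ.filter (fun f : Fin N → Fin d → Fin q => ∀ j, ∃ i ∈ A, f j i ≠ z i))) := by
    intro f hf
    simp only [mem_filter, mem_univ, true_and] at hf
    push_neg at hf
    obtain ⟨A, hA, z, hz⟩ := hf
    set z' : Fin d → Fin q := fun i => if i ∈ A then z i else 0 with hz'def
    refine Finset.mem_biUnion.2 ⟨A, ?_, Finset.mem_biUnion.2 ⟨z', ?_, ?_⟩⟩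
    · exact Finset.mem_powersetCard_univ.2 hA
    · rw [Fintype.mem_piFinset]
      intro i
      by_cases hi : i ∈ A <;> simp [z', hi]
    · simp only [mem_filter, mem_univ, true_and]
      intro j
      obtain ⟨i, hi, hne⟩ := hz j
      exact ⟨i, hi, by simpa [z', hi] using hne⟩
  calc _ ≤ _ := Finset.card_le_card hsub
    _ ≤ ∑ A ∈ univ.powersetCard a,
        ((Fintype.piFinset (fun i : Fin d => if i ∈ A then (univ : Finset (Fin q)) else {0})).biUnion
          (fun z => univ.filter (fun f : Fin N → Fin d → Fin q => ∀ j, ∃ i ∈ A, f j i ≠ z i))).card :=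
      Finset.card_biUnion_le
    _ ≤ ∑ A ∈ univ.powersetCard a, (q ^ a * (q ^ d - q ^ (d - a)) ^ N) := by
      apply Finset.sum_le_sum
      intro A hA
      have hAa : A.card = a := (Finset.mem_powersetCard_univ.1 hA)
      calc _ ≤ ∑ z ∈ Fintype.piFinset (fun i : Fin d => if i ∈ A then (univ : Finset (Fin q)) else {0}),
            (univ.filter (fun f : Fin N → Fin d → Fin q => ∀ j, ∃ i ∈ A, f j i ≠ z i)).card :=
          Finset.card_biUnion_le
        _ = _ := by
          rw [Finset.sum_congr rfl (fun z _ => stmt_12_card_bad A z), Finset.sum_const,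
            stmt_12_card_patterns, hAa, smul_eq_mul]
    _ = _ := by
      rw [Finset.sum_const, Finset.card_powersetCard, card_univ, Fintype.card_fin, smul_eq_mul]

/-- Transfer of the real smallness hypothesis to a strict inequality of natural numbers. -/
lemma stmt_12_numeric (m d N a : ℕ) (hm : 2 ≤ m) (ha : a ≤ d)
    (hsmall : (d.choose a : ℝ) * ((2 : ℝ) ^ m - 1) ^ a *
      (1 - (((2 : ℝ) ^ m - 1) ^ a)⁻¹) ^ N < 1) :
    d.choose a * ((2 ^ m - 1) ^ a * ((2 ^ m - 1) ^ d - (2 ^ m - 1) ^ (d - a)) ^ N)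
      < (2 ^ m - 1) ^ (d * N) := by
  set q : ℕ := 2 ^ m - 1 with hqdef
  have hq1 : 1 ≤ q := by
    have : 4 ≤ 2 ^ m := by
      calc 4 = 2 ^ 2 := rfl
        _ ≤ 2 ^ m := Nat.pow_le_pow_right (by norm_num) hm
    omega
  have hQcast : ((q : ℕ) : ℝ) = (2 : ℝ) ^ m - 1 := by
    have h1 : 1 ≤ 2 ^ m := Nat.one_le_two_pow
    push_cast [hqdef, Nat.cast_sub h1]
    ring
  set Q : ℝ := ((q : ℕ) : ℝ) with hQdef
  have hQpos : (0 : ℝ) < Q := by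
    rw [hQdef]; exact_mod_cast hq1
  have hpowle : q ^ (d - a) ≤ q ^ d := Nat.pow_le_pow_right hq1 (Nat.sub_le d a)
  have hcast : ((q ^ d - q ^ (d - a) : ℕ) : ℝ) = Q ^ d - Q ^ (d - a) := by
    push_cast [Nat.cast_sub hpowle]; ring
  have key : (d.choose a : ℝ) * (Q ^ a * (Q ^ d - Q ^ (d - a)) ^ N) < Q ^ (d * N) := by
    have hsub : Q ^ d - Q ^ (d - a) = Q ^ d * (1 - (Q ^ a)⁻¹) := by
      have h1 : Q ^ (d - a) * Q ^ a = Q ^ d := by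
        rw [← pow_add, Nat.sub_add_cancel ha]
      have h2 : Q ^ a ≠ 0 := by positivity
      field_simp
      nlinarith [h1]
    have hdN : Q ^ (d * N) = (Q ^ d) ^ N := by rw [pow_mul]
    rw [hsub, mul_pow, hdN]
    have hQdN : (0 : ℝ) < (Q ^ d) ^ N := by positivity
    calc (d.choose a : ℝ) * (Q ^ a * ((Q ^ d) ^ N * (1 - (Q ^ a)⁻¹) ^ N))
        = ((d.choose a : ℝ) * ((2 : ℝ) ^ m - 1) ^ a * (1 - (((2 : ℝ) ^ m - 1) ^ a)⁻¹) ^ N)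
          * (Q ^ d) ^ N := by rw [← hQcast]; ring
      _ < 1 * (Q ^ d) ^ N := mul_lt_mul_of_pos_right hsmall hQdN
      _ = (Q ^ d) ^ N := one_mul _
  have : ((d.choose a * (q ^ a * (q ^ d - q ^ (d - a)) ^ N) : ℕ) : ℝ) < ((q ^ (d * N) : ℕ) : ℝ) := by
    push_cast [hcast]
    exact key
  exact_mod_cast this

/-- If `binom(d, A_m)·(2^m-1)^{A_m}·(1-(2^m-1)^{-A_m})^N < 1` with `A_m = min(m·2^m, d)`,
then there is a set `T ⊆ {1,…,2^m-1}^d` of cardinality at most `N` satisfying condition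
(S) of order `m`. -/
theorem stmt_12 (m d N : ℕ) (hm : 2 ≤ m) (hd : 2 ≤ d) (hN : 1 ≤ N)
    (hsmall : (d.choose (min (m * 2 ^ m) d) : ℝ) *
        ((2 : ℝ) ^ m - 1) ^ (min (m * 2 ^ m) d) *
        (1 - (((2 : ℝ) ^ m - 1) ^ (min (m * 2 ^ m) d))⁻¹) ^ N < 1) :
    ∃ T : Finset (Fin d → ℕ),
      (∀ x ∈ T, ∀ i, 1 ≤ x i ∧ x i ≤ 2 ^ m - 1) ∧ T.card ≤ N ∧
      ∀ A : Finset (Fin d), A.card = min (m * 2 ^ m) d →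
        ∀ z : Fin d → ℕ, (∀ i, 1 ≤ z i ∧ z i ≤ 2 ^ m - 1) →
          ∃ x ∈ T, ∀ i ∈ A, x i = z i := by
  classical
  obtain ⟨a, hadef⟩ : ∃ a, a = min (m * 2 ^ m) d := ⟨_, rfl⟩
  rw [← hadef] at hsmall ⊢
  have ha : a ≤ d := hadef ▸ min_le_right _ _
  obtain ⟨q, hqdef⟩ : ∃ q, q = 2 ^ m - 1 := ⟨_, rfl⟩
  rw [← hqdef]
  have hq1 : 1 ≤ q := by
    have : 4 ≤ 2 ^ m := by
      calc 4 = 2 ^ 2 := rfl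
        _ ≤ 2 ^ m := Nat.pow_le_pow_right (by norm_num) hm
    omega
  haveI : NeZero q := ⟨by omega⟩
  -- there exists a good tuple `f`
  have hcardΩ : Fintype.card (Fin N → Fin d → Fin q) = q ^ (d * N) := by
    rw [Fintype.card_fun, Fintype.card_fun, Fintype.card_fin, Fintype.card_fin,
      Fintype.card_fin, ← pow_mul]
  have hlt : (univ.filter (fun f : Fin N → Fin d → Fin q =>
      ¬ ∀ A : Finset (Fin d), A.card = a → ∀ z : Fin d → Fin q,
        ∃ j, ∀ i ∈ A, f j i = z i)).card < Fintype.card (Fin N → Fin d → Fin q) := by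
    rw [hcardΩ]
    have hnum := stmt_12_numeric m d N a hm ha hsmall
    rw [← hqdef] at hnum
    exact lt_of_le_of_lt stmt_12_union_bound hnum
  obtain ⟨f, hfgood⟩ : ∃ f : Fin N → Fin d → Fin q,
      ∀ A : Finset (Fin d), A.card = a → ∀ z : Fin d → Fin q,
        ∃ j, ∀ i ∈ A, f j i = z i := by
    by_contra h
    push_neg at h
    have : (univ.filter (fun f : Fin N → Fin d → Fin q =>
        ¬ ∀ A : Finset (Fin d), A.card = a → ∀ z : Fin d → Fin q,
          ∃ j, ∀ i ∈ A, f j i = z i)) = univ := by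
      apply Finset.filter_true_of_mem
      intro f _
      intro hgood
      obtain ⟨A, hA, z, hz⟩ := h f
      obtain ⟨j, hj⟩ := hgood A hA z
      obtain ⟨i, hi, hne⟩ := hz j
      exact hne (hj i hi)
    rw [this, card_univ] at hlt
    exact lt_irrefl _ hlt
  -- build `T`
  refine ⟨univ.image (fun j : Fin N => fun i : Fin d => ((f j i : ℕ) + 1)), ?_, ?_, ?_⟩
  · intro x hx i
    obtain ⟨j, _, rfl⟩ := Finset.mem_image.1 hx
    exact ⟨Nat.succ_le_succ (Nat.zero_le _), (f j i).isLt⟩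
  · calc (univ.image (fun j : Fin N => fun i : Fin d => ((f j i : ℕ) + 1))).card
        ≤ (univ : Finset (Fin N)).card := Finset.card_image_le
      _ = N := by rw [card_univ, Fintype.card_fin]
  · intro A hA z hz
    have hzq : ∀ i, z i - 1 < q :=
      fun i => Nat.lt_of_lt_of_le (Nat.sub_lt (hz i).1 Nat.one_pos) (hz i).2
    obtain ⟨j, hj⟩ := hfgood A hA (fun i => ⟨z i - 1, hzq i⟩)
    refine ⟨fun i : Fin d => ((f j i : ℕ) + 1), Finset.mem_image.2 ⟨j, Finset.mem_univ j, rfl⟩, ?_⟩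
    intro i hi
    have hval : (f j i : ℕ) = z i - 1 := by rw [hj i hi]
    show (f j i : ℕ) + 1 = z i
    rw [hval]
    exact Nat.sub_add_cancel (hz i).1
end

section
/- For every ε ∈ (0, 1/4] and every d ≥ 2 there exists a constant c_ε > 0 (independent of d) and a point set P ⊆ [0,1]^d with disp(P) ≤ ε and #P ≤ c_ε · log(d). -/
open Finset in
lemma sos_exists_good (N K n d : ℕ) (hN : 1 ≤ N) (hd : 1 ≤ d)
    (hn : ((K:ℝ)+1) * (d:ℝ)^K * (N:ℝ)^K * (1 - ((N:ℝ)^K)⁻¹)^n < 1) :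
    ∃ ω : Fin n → (Fin d → Fin N), ∀ T : Finset (Fin d), T.card ≤ K →
      ∀ w : Fin d → Fin N, ∃ i, ∀ j ∈ T, ω i j = w j := by
  haveI : NeZero N := ⟨by omega⟩
  have hN0 : (0:ℝ) < (N:ℝ) := by exact_mod_cast Nat.pos_of_ne_zero (by omega)
  have hN1 : (1:ℝ) ≤ (N:ℝ) := by exact_mod_cast hN
  have hNK1 : (1:ℝ) ≤ (N:ℝ)^K := one_le_pow₀ hN1
  set q : ℝ := ((N:ℝ)^K)⁻¹ with hq
  have hq0 : 0 < q := by positivity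
  have hq1 : q ≤ 1 := inv_le_one_of_one_le₀ hNK1
  have hBnn : (0:ℝ) ≤ ((N:ℝ)^d * (1-q))^n := by
    apply pow_nonneg
    apply mul_nonneg (by positivity)
    linarith
  set bad : Finset (Fin n → Fin d → Fin N) := univ.filter (fun ω => ∃ T : Finset (Fin d),
    T.card ≤ K ∧ ∃ w : Fin d → Fin N, (∀ j, j ∉ T → w j = 0) ∧ ∀ i, ∃ j ∈ T, ω i j ≠ w j)
    with hbad
  set TS : Finset (Finset (Fin d)) := univ.filter (fun T => T.card ≤ K) with hTS
  set WS : Finset (Fin d) → Finset (Fin d → Fin N) :=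
    fun T => Fintype.piFinset (fun j => if j ∈ T then (univ : Finset (Fin N)) else {0}) with hWS
  set BadF : Finset (Fin d) → (Fin d → Fin N) → Finset (Fin n → Fin d → Fin N) :=
    fun T w => univ.filter (fun ω => ∀ i, ∃ j ∈ T, ω i j ≠ w j) with hBadF
  have hsub : bad ⊆ TS.biUnion (fun T => (WS T).biUnion (fun w => BadF T w)) := by
    intro ω hω
    simp only [hbad, mem_filter, mem_univ, true_and] at hω
    obtain ⟨T, hT, w, hw0, hww⟩ := hω
    refine mem_biUnion.2 ⟨T, by simp [hTS, hT], mem_biUnion.2 ⟨w, ?_, ?_⟩⟩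
    · simp only [hWS, Fintype.mem_piFinset]
      intro j
      by_cases hj : j ∈ T <;> simp [hj, hw0 j]
    · simp [hBadF, hww]
  -- card of BadF
  have hBadcard : ∀ T : Finset (Fin d), T.card ≤ K → ∀ w : Fin d → Fin N,
      ((BadF T w).card : ℝ) ≤ ((N:ℝ)^d * (1 - q))^n := by
    intro T hT w
    have hTd : T.card ≤ d := by simpa using T.card_le_univ
    set Bpt : Finset (Fin d → Fin N) := univ.filter (fun x => ∃ j ∈ T, x j ≠ w j) with hBpt
    have h1 : BadF T w = Fintype.piFinset (fun _ : Fin n => Bpt) := by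
      ext ω
      simp [hBadF, hBpt, Fintype.mem_piFinset]
    have h2 : (BadF T w).card = Bpt.card ^ n := by
      rw [h1, Fintype.card_piFinset]
      simp
    have hGpt : (univ.filter (fun x : Fin d → Fin N => ¬ ∃ j ∈ T, x j ≠ w j)).card
        = N ^ (d - T.card) := by
      have he : (univ.filter (fun x : Fin d → Fin N => ¬ ∃ j ∈ T, x j ≠ w j))
          = Fintype.piFinset (fun j => if j ∈ T then ({w j} : Finset (Fin N)) else univ) := by
        ext x
        simp only [mem_filter, mem_univ, true_and, Fintype.mem_piFinset]
        constructor
        · intro h j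
          by_cases hj : j ∈ T
          · simp only [hj, if_true, mem_singleton]
            by_contra hne
            exact h ⟨j, hj, hne⟩
          · simp [hj]
        · rintro h ⟨j, hj, hne⟩
          have := h j
          rw [if_pos hj, mem_singleton] at this
          exact hne this
      rw [he, Fintype.card_piFinset]
      have hc : ∀ j : Fin d, (if j ∈ T then ({w j} : Finset (Fin N)) else univ).card
          = N ^ (if j ∈ T then 0 else 1) := by
        intro j; by_cases hj : j ∈ T <;> simp [hj]
      rw [Finset.prod_congr rfl (fun j _ => hc j), Finset.prod_pow_eq_pow_sum]
      congr 1
      have h3 : ∀ j : Fin d, (if j ∈ T then (0:ℕ) else 1) = (if j ∈ Tᶜ then 1 else 0) := by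
        intro j; by_cases hj : j ∈ T <;> simp [hj]
      rw [Finset.sum_congr rfl (fun j _ => h3 j), Finset.sum_ite_mem]
      simp [Finset.card_compl]
    have hsplit : Bpt.card + N ^ (d - T.card) = N ^ d := by
      have h5 := Finset.card_filter_add_card_filter_not
        (s := (univ : Finset (Fin d → Fin N))) (p := fun x => ∃ j ∈ T, x j ≠ w j)
      rw [hGpt] at h5
      simpa [Fintype.card_fun] using h5
    have hBle : (Bpt.card : ℝ) ≤ (N:ℝ)^d * (1 - q) := by
      have hcast : (Bpt.card : ℝ) = (N:ℝ)^d - (N:ℝ)^(d - T.card) := by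
        have h4 : ((Bpt.card : ℝ)) + (N:ℝ)^(d-T.card) = (N:ℝ)^d := by exact_mod_cast hsplit
        linarith
      rw [hcast, mul_one_sub]
      have h6 : (N:ℝ)^d ≤ (N:ℝ)^(d - T.card) * (N:ℝ)^K := by
        rw [← pow_add]
        refine pow_le_pow_right₀ hN1 ?_
        calc d = d - T.card + T.card := (Nat.sub_add_cancel hTd).symm
          _ ≤ d - T.card + K := Nat.add_le_add_left hT _
      have hpow : (0:ℝ) < (N:ℝ)^K := by positivity
      have h7 : (N:ℝ)^d * q ≤ (N:ℝ)^(d - T.card) := by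
        simp only [hq]
        rw [mul_inv_le_iff₀ hpow]
        exact h6
      linarith
    rw [h2]
    push_cast
    apply pow_le_pow_left₀ (by positivity) hBle
  have hWScard : ∀ T ∈ TS, ((WS T).card : ℝ) ≤ (N:ℝ)^K := by
    intro T hT
    simp only [hTS, mem_filter, mem_univ, true_and] at hT
    have he : (WS T).card = ∏ j, (if j ∈ T then (univ : Finset (Fin N)) else {0}).card := by
      rw [hWS, Fintype.card_piFinset]
    have h2 : (WS T).card ≤ N ^ K := by
      rw [he]
      have hc : ∀ j : Fin d, (if j ∈ T then (univ : Finset (Fin N)) else {0}).card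
          = N ^ (if j ∈ T then 1 else 0) := by
        intro j; by_cases hj : j ∈ T <;> simp [hj]
      rw [Finset.prod_congr rfl (fun j _ => hc j), Finset.prod_pow_eq_pow_sum]
      have h4 : ∑ j : Fin d, (if j ∈ T then 1 else 0) = T.card := by
        rw [Finset.sum_ite_mem]
        simp
      rw [h4]
      exact Nat.pow_le_pow_right (by omega) hT
    exact_mod_cast h2
  have hTScard : ((TS.card : ℝ)) ≤ ((K:ℝ)+1) * (d:ℝ)^K := by
    have hsub2 : TS ⊆ (range (K+1)).biUnion (fun s => Finset.powersetCard s univ) := by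
      intro T hT
      simp only [hTS, mem_filter, mem_univ, true_and] at hT
      exact mem_biUnion.2 ⟨T.card, mem_range.2 (by omega), by simp [Finset.mem_powersetCard]⟩
    have h1 : TS.card ≤ ∑ s ∈ range (K+1), (Finset.powersetCard s (univ : Finset (Fin d))).card :=
      le_trans (card_le_card hsub2) (card_biUnion_le)
    have h2 : ∀ s ∈ range (K+1), (Finset.powersetCard s (univ : Finset (Fin d))).card ≤ d ^ K := by
      intro s hs
      rw [Finset.card_powersetCard]
      simp only [card_univ, Fintype.card_fin]
      calc d.choose s ≤ d ^ s := Nat.choose_le_pow d s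
        _ ≤ d ^ K := Nat.pow_le_pow_right hd (by simp at hs; omega)
    have h3 : TS.card ≤ (K+1) * d ^ K := by
      calc TS.card ≤ ∑ s ∈ range (K+1), (Finset.powersetCard s (univ : Finset (Fin d))).card := h1
        _ ≤ ∑ _s ∈ range (K+1), d ^ K := sum_le_sum h2
        _ = (K+1) * d ^ K := by simp [mul_comm]
    exact_mod_cast h3
  have htotal : (bad.card : ℝ) < ((N:ℝ)^d)^n := by
    have h1 : (bad.card : ℝ) ≤ ∑ T ∈ TS, ∑ w ∈ WS T, ((BadF T w).card : ℝ) := by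
      have h2 := le_trans (card_le_card hsub) card_biUnion_le
      have h3 : ∑ T ∈ TS, ((WS T).biUnion (fun w => BadF T w)).card
          ≤ ∑ T ∈ TS, ∑ w ∈ WS T, (BadF T w).card :=
        sum_le_sum (fun T _ => card_biUnion_le)
      exact_mod_cast le_trans h2 h3
    have h2 : ∑ T ∈ TS, ∑ w ∈ WS T, ((BadF T w).card : ℝ)
        ≤ ((K:ℝ)+1) * (d:ℝ)^K * ((N:ℝ)^K * ((N:ℝ)^d * (1-q))^n) := by
      calc ∑ T ∈ TS, ∑ w ∈ WS T, ((BadF T w).card : ℝ)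
          ≤ ∑ _T ∈ TS, ((N:ℝ)^K * ((N:ℝ)^d * (1-q))^n) := by
            apply sum_le_sum
            intro T hT
            have hTc : T.card ≤ K := by
              simp only [hTS, mem_filter, mem_univ, true_and] at hT; exact hT
            calc ∑ w ∈ WS T, ((BadF T w).card : ℝ)
                ≤ ∑ _w ∈ WS T, ((N:ℝ)^d * (1-q))^n :=
                  sum_le_sum (fun w _ => hBadcard T hTc w)
              _ = (WS T).card * ((N:ℝ)^d * (1-q))^n := by rw [sum_const, nsmul_eq_mul]
              _ ≤ (N:ℝ)^K * ((N:ℝ)^d * (1-q))^n :=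
                  mul_le_mul_of_nonneg_right (hWScard T hT) hBnn
        _ = TS.card * ((N:ℝ)^K * ((N:ℝ)^d * (1-q))^n) := by rw [sum_const, nsmul_eq_mul]
        _ ≤ ((K:ℝ)+1) * (d:ℝ)^K * ((N:ℝ)^K * ((N:ℝ)^d * (1-q))^n) := by
            apply mul_le_mul_of_nonneg_right hTScard
            apply mul_nonneg (by positivity) hBnn
    have h3 : ((K:ℝ)+1) * (d:ℝ)^K * ((N:ℝ)^K * ((N:ℝ)^d * (1-q))^n) < ((N:ℝ)^d)^n := by
      rw [mul_pow]
      have hpos : (0:ℝ) < ((N:ℝ)^d)^n := by positivity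
      calc ((K:ℝ)+1) * (d:ℝ)^K * ((N:ℝ)^K * (((N:ℝ)^d)^n * (1-q)^n))
          = (((K:ℝ)+1) * (d:ℝ)^K * ((N:ℝ)^K) * (1-q)^n) * ((N:ℝ)^d)^n := by ring
        _ < 1 * ((N:ℝ)^d)^n := mul_lt_mul_of_pos_right hn hpos
        _ = ((N:ℝ)^d)^n := by ring
    linarith
  have hcardlt : bad.card < (univ : Finset (Fin n → Fin d → Fin N)).card := by
    have hcu : (((univ : Finset (Fin n → Fin d → Fin N)).card : ℝ)) = ((N:ℝ)^d)^n := by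
      simp [card_univ, Fintype.card_fun]
    exact_mod_cast hcu ▸ htotal
  have hcompl : (badᶜ).Nonempty := by
    rw [← Finset.card_pos, Finset.card_compl]
    have h8 : bad.card ≤ Fintype.card (Fin n → Fin d → Fin N) := bad.card_le_univ
    have h9 := Finset.card_univ (α := Fin n → Fin d → Fin N) ▸ hcardlt
    omega
  obtain ⟨ω, hω⟩ := hcompl
  rw [Finset.mem_compl] at hω
  refine ⟨ω, ?_⟩
  intro T hT w
  simp only [hbad, mem_filter, mem_univ, true_and] at hω
  push_neg at hω
  obtain ⟨i, hi⟩ := hω T hT (fun j => if j ∈ T then w j else 0) (fun j hj => by simp [hj])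
  refine ⟨i, fun j hj => ?_⟩
  have := hi j hj
  simpa [hj] using this


lemma sos_grid (k : ℕ) (a b : ℝ) (ha : 0 ≤ a) (hb : b ≤ 1)
    (h : ((2:ℝ)^k)⁻¹ < b - a) :
    ∃ m : ℕ, m + 1 < 2^k ∧ a < ((m:ℝ)+1)/2^k ∧ ((m:ℝ)+1)/2^k < b := by
  have h2 : (0:ℝ) < 2^k := by positivity
  set m := ⌊a * 2^k⌋₊ with hm
  have hm1 : a * 2^k < m + 1 := Nat.lt_floor_add_one _
  have hm2 : (m:ℝ) ≤ a * 2^k := Nat.floor_le (by positivity)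
  have hlt1 : a < ((m:ℝ)+1)/2^k := by
    rw [lt_div_iff₀ h2]
    exact hm1
  have hlt2 : ((m:ℝ)+1)/2^k < b := by
    rw [div_lt_iff₀ h2]
    have h5 := mul_lt_mul_of_pos_right h h2
    rw [inv_mul_cancel₀ (ne_of_gt h2), sub_mul] at h5
    linarith
  have hnat : m + 1 < 2^k := by
    have hx : ((m:ℝ)+1) < 2^k := by
      have hb2 : b * 2^k ≤ 2^k := by nlinarith
      rw [div_lt_iff₀ h2] at hlt2
      linarith
    exact_mod_cast hx
  exact ⟨m, hnat, hlt1, hlt2⟩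

set_option maxHeartbeats 1000000 in
/-- Sosnovec's theorem: for every `ε ∈ (0,1/4]` there is a constant `c_ε > 0` such that
for every `d ≥ 2` there is a point set `P ⊆ [0,1]^d` with `disp(P) ≤ ε` and
`#P ≤ c_ε · log d` (every axis-parallel box disjoint from `P` has volume `≤ ε`). -/
theorem stmt_13 (ε : ℝ) (hε : 0 < ε) (hε' : ε ≤ 1 / 4) :
    ∃ c : ℝ, 0 < c ∧ ∀ d : ℕ, 2 ≤ d →
      ∃ P : Finset (Fin d → ℝ),
        (∀ x ∈ P, ∀ j, x j ∈ Set.Icc (0 : ℝ) 1) ∧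
        (P.card : ℝ) ≤ c * Real.log d ∧
        ∀ (a b : Fin d → ℝ) (I : Fin d → Set ℝ),
          (∀ j, 0 ≤ a j ∧ a j ≤ b j ∧ b j ≤ 1) →
          (∀ j, Set.Ioo (a j) (b j) ⊆ I j ∧ I j ⊆ Set.Icc (a j) (b j)) →
          (∀ x ∈ P, ∃ j, x j ∉ I j) →
          ∏ j, (b j - a j) ≤ ε := by
  classical
  -- choose the dyadic level k
  obtain ⟨k0, hk0⟩ := pow_unbounded_of_one_lt (R := ℝ) (1/ε) one_lt_two
  set k : ℕ := k0 + 2 with hkdef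
  have hk2 : (1:ℝ)/ε < 2^k := by
    refine lt_of_lt_of_le hk0 ?_
    apply pow_le_pow_right₀ one_le_two
    omega
  have h2k : (0:ℝ) < 2^k := by positivity
  have h2k4 : (4:ℝ) ≤ 2^k := by
    calc (4:ℝ) = 2^2 := by norm_num
      _ ≤ 2^k := by
          apply pow_le_pow_right₀ one_le_two
          omega
  have h2k4n : 4 ≤ 2^k := by
    calc 4 = 2^2 := by norm_num
      _ ≤ 2^k := Nat.pow_le_pow_right (by norm_num) (by omega)
  have hek : ((2:ℝ)^k)⁻¹ < ε := by
    have h1 := mul_lt_mul_of_pos_right hk2 hε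
    rw [one_div, inv_mul_cancel₀ (ne_of_gt hε)] at h1
    have h3 := mul_lt_mul_of_pos_left h1 (inv_pos.mpr h2k)
    rw [mul_one, ← mul_assoc, inv_mul_cancel₀ (ne_of_gt h2k), one_mul] at h3
    exact h3
  -- parameters
  set N : ℕ := 2^k - 1 with hNdef
  set K : ℕ := k * 2^k with hKdef
  have hN1 : 1 ≤ N := by omega
  have hNR : (N:ℝ) = 2^k - 1 := by
    rw [hNdef]
    push_cast [Nat.cast_sub Nat.one_le_two_pow]
    norm_num
  have hNR1 : (1:ℝ) ≤ (N:ℝ) := by exact_mod_cast hN1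
  have hKR : (K:ℝ) = (k:ℝ) * 2^k := by rw [hKdef]; push_cast; ring
  set q : ℝ := ((N:ℝ)^K)⁻¹ with hqdef
  have hq0 : 0 < q := by positivity
  have hq1 : q ≤ 1 := inv_le_one_of_one_le₀ (one_le_pow₀ hNR1)
  set L : ℝ := Real.log (K+1) + K * Real.log N with hLdef
  have hL0 : 0 ≤ L := by
    apply add_nonneg
    · apply Real.log_nonneg; push_cast; linarith [Nat.cast_nonneg (α := ℝ) K]
    · apply mul_nonneg (Nat.cast_nonneg K) (Real.log_nonneg hNR1)
  have hlog2 : (0:ℝ) < Real.log 2 := Real.log_pos one_lt_two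
  set C : ℝ := (L / Real.log 2 + K + 1) / q with hCdef
  have hC0 : 0 < C := by
    apply div_pos _ hq0
    have : 0 ≤ L / Real.log 2 := div_nonneg hL0 hlog2.le
    have := Nat.cast_nonneg (α := ℝ) K
    linarith
  refine ⟨C + 1 / Real.log 2, by positivity, ?_⟩
  intro d hd
  have hd1 : 1 ≤ d := by omega
  have hdR : (2:ℝ) ≤ (d:ℝ) := by exact_mod_cast hd
  have hlogd : Real.log 2 ≤ Real.log d := Real.log_le_log (by norm_num) hdR
  have hlogd0 : 0 < Real.log d := lt_of_lt_of_le hlog2 hlogd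
  set n : ℕ := ⌈C * Real.log d⌉₊ with hndef
  have hnge : C * Real.log d ≤ (n:ℝ) := Nat.le_ceil _
  have hnlt : (n:ℝ) ≤ C * Real.log d + 1 := (Nat.ceil_lt_add_one (by positivity)).le
  -- main numeric inequality
  have hmain : ((K:ℝ)+1) * (d:ℝ)^K * (N:ℝ)^K * (1 - ((N:ℝ)^K)⁻¹)^n < 1 := by
    set A : ℝ := ((K:ℝ)+1) * (d:ℝ)^K * (N:ℝ)^K with hAdef
    have hA : (0:ℝ) < A := by positivity
    have h1 : (1-q)^n ≤ Real.exp (-(q*n)) := by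
      have he : 1 - q ≤ Real.exp (-q) := by linarith [Real.add_one_le_exp (-q)]
      calc (1-q)^n ≤ (Real.exp (-q))^n := pow_le_pow_left₀ (by linarith) he n
        _ = Real.exp (-(q*n)) := by
            rw [← Real.exp_nat_mul]
            congr 1
            ring
    have hlogA : Real.log A = Real.log ((K:ℝ)+1) + K * Real.log d + K * Real.log N := by
      rw [hAdef, Real.log_mul (by positivity) (by positivity),
        Real.log_mul (by positivity) (by positivity), Real.log_pow, Real.log_pow]
    have h2 : Real.log A < q * n := by
      have hqC : q * C = L / Real.log 2 + K + 1 := by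
        rw [hCdef]
        field_simp
      have hstep : q * n ≥ (L / Real.log 2 + K + 1) * Real.log d := by
        calc q * n ≥ q * (C * Real.log d) := by
              apply mul_le_mul_of_nonneg_left hnge hq0.le
          _ = (L / Real.log 2 + K + 1) * Real.log d := by rw [← mul_assoc, hqC]
      have hL2 : L / Real.log 2 * Real.log d ≥ L := by
        rw [div_mul_eq_mul_div, ge_iff_le, le_div_iff₀ hlog2]
        exact mul_le_mul_of_nonneg_left hlogd hL0
      have hKlog : (K:ℝ) * Real.log d ≥ 0 := mul_nonneg (Nat.cast_nonneg K) hlogd0.le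
      rw [hlogA]
      have hexp : (L / Real.log 2 + K + 1) * Real.log d
          = L / Real.log 2 * Real.log d + K * Real.log d + Real.log d := by ring
      rw [hLdef] at hL2
      push_cast at hL2 ⊢
      nlinarith
    calc ((K:ℝ)+1) * (d:ℝ)^K * (N:ℝ)^K * (1 - ((N:ℝ)^K)⁻¹)^n
        = A * (1-q)^n := by rw [hAdef, hqdef]
      _ ≤ A * Real.exp (-(q*n)) := mul_le_mul_of_nonneg_left h1 hA.le
      _ < A * Real.exp (-(Real.log A)) := by
          apply mul_lt_mul_of_pos_left _ hA
          apply Real.exp_lt_exp.mpr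
          linarith
      _ = 1 := by
          rw [Real.exp_neg, Real.exp_log hA, mul_inv_cancel₀ (ne_of_gt hA)]
  obtain ⟨ω, hω⟩ := sos_exists_good N K n d hN1 hd1 hmain
  -- the point set
  set v : Fin N → ℝ := fun m => (((m:ℕ):ℝ)+1)/2^k with hvdef
  have hvpos : ∀ m : Fin N, ((2:ℝ)^k)⁻¹ ≤ v m := by
    intro m
    rw [hvdef, inv_eq_one_div]
    have h1 : (1:ℝ) ≤ ((m:ℕ):ℝ)+1 := by
      have := Nat.cast_nonneg (α := ℝ) (m:ℕ)
      linarith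
    rw [div_le_div_iff₀ h2k h2k]
    nlinarith
  have hvle : ∀ m : Fin N, v m ≤ 1 - ((2:ℝ)^k)⁻¹ := by
    intro m
    have hmN : ((m:ℕ):ℝ) + 1 ≤ (N:ℝ) := by exact_mod_cast m.2
    rw [hvdef, div_le_iff₀ h2k]
    have he : (1 - ((2:ℝ)^k)⁻¹)*2^k = 2^k - 1 := by field_simp
    rw [he, ← hNR]
    linarith
  have hinv0 : (0:ℝ) < ((2:ℝ)^k)⁻¹ := by positivity
  have hinv4 : ((2:ℝ)^k)⁻¹ ≤ 1/4 := by
    rw [show (1:ℝ)/4 = 4⁻¹ by norm_num]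
    exact inv_anti₀ (by norm_num) h2k4
  set P : Finset (Fin d → ℝ) :=
    Finset.image (fun i : Fin n => fun j => v (ω i j)) Finset.univ with hPdef
  refine ⟨P, ?_, ?_, ?_⟩
  · intro x hx j
    rw [hPdef, Finset.mem_image] at hx
    obtain ⟨i, _, rfl⟩ := hx
    exact ⟨le_trans hinv0.le (hvpos _), le_trans (hvle _) (by linarith)⟩
  · have hc1 : P.card ≤ n := by
      calc P.card ≤ (Finset.univ : Finset (Fin n)).card := Finset.card_image_le
        _ = n := by simp
    calc (P.card:ℝ) ≤ (n:ℝ) := by exact_mod_cast hc1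
      _ ≤ C * Real.log d + 1 := hnlt
      _ ≤ (C + 1/Real.log 2) * Real.log d := by
          rw [add_mul]
          have h1 : (1:ℝ) ≤ 1/Real.log 2 * Real.log d := by
            rw [div_mul_eq_mul_div, one_mul, le_div_iff₀ hlog2]
            linarith
          linarith
  · intro a b I hab hI hP
    by_contra hvol
    push_neg at hvol
    have hfac : ∀ j, 0 ≤ b j - a j ∧ b j - a j ≤ 1 := by
      intro j
      obtain ⟨h1, h2, h3⟩ := hab j
      constructor <;> linarith
    have hside : ∀ j, ((2:ℝ)^k)⁻¹ < b j - a j := by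
      intro j
      have h1 : ∏ j', (b j' - a j') ≤ b j - a j := by
        rw [← Finset.mul_prod_erase Finset.univ _ (Finset.mem_univ j)]
        have h2 : ∏ j' ∈ Finset.univ.erase j, (b j' - a j') ≤ 1 :=
          Finset.prod_le_one (fun i _ => (hfac i).1) (fun i _ => (hfac i).2)
        calc (b j - a j) * ∏ j' ∈ Finset.univ.erase j, (b j' - a j')
            ≤ (b j - a j) * 1 := mul_le_mul_of_nonneg_left h2 (hfac j).1
          _ = b j - a j := mul_one _
      linarith
    set T : Finset (Fin d) :=
      Finset.univ.filter (fun j => b j - a j ≤ 1 - ((2:ℝ)^k)⁻¹) with hTdef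
    have hbase : (0:ℝ) < 1 - ((2:ℝ)^k)⁻¹ := by linarith
    have hbase1 : 1 - ((2:ℝ)^k)⁻¹ < 1 := by linarith
    have hprodT : ∏ j, (b j - a j) ≤ (1 - ((2:ℝ)^k)⁻¹)^T.card := by
      rw [← Finset.prod_filter_mul_prod_filter_not Finset.univ
        (fun j => b j - a j ≤ 1 - ((2:ℝ)^k)⁻¹)]
      have h1 : ∏ j ∈ T, (b j - a j) ≤ (1 - ((2:ℝ)^k)⁻¹)^T.card := by
        rw [← Finset.prod_const]
        apply Finset.prod_le_prod (fun i _ => (hfac i).1)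
        intro x hx
        rw [hTdef, Finset.mem_filter] at hx
        exact hx.2
      have h2 : ∏ j ∈ Finset.univ.filter (fun j => ¬ (b j - a j ≤ 1 - ((2:ℝ)^k)⁻¹)),
          (b j - a j) ≤ 1 :=
        Finset.prod_le_one (fun i _ => (hfac i).1) (fun i _ => (hfac i).2)
      have h3 : (0:ℝ) ≤ ∏ j ∈ T, (b j - a j) :=
        Finset.prod_nonneg (fun i _ => (hfac i).1)
      calc (∏ j ∈ Finset.univ.filter (fun j => b j - a j ≤ 1 - ((2:ℝ)^k)⁻¹), (b j - a j)) *
            ∏ j ∈ Finset.univ.filter (fun j => ¬ (b j - a j ≤ 1 - ((2:ℝ)^k)⁻¹)), (b j - a j)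
          ≤ (1 - ((2:ℝ)^k)⁻¹)^T.card * 1 := by
            apply mul_le_mul h1 h2 (Finset.prod_nonneg (fun i _ => (hfac i).1))
            exact pow_nonneg hbase.le _
        _ = (1 - ((2:ℝ)^k)⁻¹)^T.card := mul_one _
    have hKpow : (1 - ((2:ℝ)^k)⁻¹)^(K+1) ≤ ((2:ℝ)^k)⁻¹ := by
      have he1 : 1 - ((2:ℝ)^k)⁻¹ ≤ Real.exp (-((2:ℝ)^k)⁻¹) := by
        linarith [Real.add_one_le_exp (-((2:ℝ)^k)⁻¹)]
      have he2 : (1 - ((2:ℝ)^k)⁻¹)^(K+1) ≤ Real.exp (((K:ℝ)+1) * -((2:ℝ)^k)⁻¹) := by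
        calc (1 - ((2:ℝ)^k)⁻¹)^(K+1) ≤ (Real.exp (-((2:ℝ)^k)⁻¹))^(K+1) :=
              pow_le_pow_left₀ hbase.le he1 _
          _ = Real.exp (((K:ℝ)+1) * -((2:ℝ)^k)⁻¹) := by
              rw [← Real.exp_nat_mul]
              push_cast
              ring_nf
      have hKinv : (k:ℝ) ≤ ((K:ℝ)+1) * ((2:ℝ)^k)⁻¹ := by
        have he : (k:ℝ)*2^k*((2:ℝ)^k)⁻¹ = k := by field_simp
        rw [hKR]
        nlinarith
      have he3 : Real.exp (((K:ℝ)+1) * -((2:ℝ)^k)⁻¹) ≤ Real.exp (-(k:ℝ)) := by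
        apply Real.exp_le_exp.mpr
        nlinarith
      have he4 : Real.exp (-(k:ℝ)) ≤ ((2:ℝ)^k)⁻¹ := by
        rw [Real.exp_neg]
        apply inv_anti₀ h2k
        calc (2:ℝ)^k ≤ (Real.exp 1)^k :=
              pow_le_pow_left₀ (by norm_num) (by linarith [Real.add_one_le_exp 1]) k
          _ = Real.exp k := Real.exp_one_pow k
      linarith
    have hTK : T.card ≤ K := by
      by_contra hTK
      push_neg at hTK
      have h1 : (1 - ((2:ℝ)^k)⁻¹)^T.card ≤ (1 - ((2:ℝ)^k)⁻¹)^(K+1) :=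
        pow_le_pow_of_le_one hbase.le hbase1.le hTK
      linarith
    have hgrid : ∀ j, j ∈ T → ∃ m : ℕ, m + 1 < 2^k ∧ a j < ((m:ℝ)+1)/2^k ∧
        ((m:ℝ)+1)/2^k < b j :=
      fun j _ => sos_grid k (a j) (b j) (hab j).1 (hab j).2.2 (hside j)
    set w : Fin d → Fin N := fun j => if h : j ∈ T then
        ⟨(hgrid j h).choose, by have := (hgrid j h).choose_spec.1; omega⟩
      else ⟨0, by omega⟩ with hwdef
    obtain ⟨i, hi⟩ := hω T hTK w
    have hxmem : (fun j => v (ω i j)) ∈ P := by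
      rw [hPdef]
      exact Finset.mem_image_of_mem _ (Finset.mem_univ i)
    obtain ⟨j, hj⟩ := hP _ hxmem
    apply hj
    apply (hI j).1
    by_cases hjT : j ∈ T
    · have hwj := hi j hjT
      have hval : v (ω i j) = (((hgrid j hjT).choose : ℝ)+1)/2^k := by
        rw [hwj, hwdef]
        simp only [dif_pos hjT]
        rfl
      rw [hval]
      exact ⟨(hgrid j hjT).choose_spec.2.1, (hgrid j hjT).choose_spec.2.2⟩
    · have hjlong : 1 - ((2:ℝ)^k)⁻¹ < b j - a j := by
        rw [hTdef] at hjT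
        simp only [Finset.mem_filter, Finset.mem_univ, true_and, not_le] at hjT
        exact hjT
      constructor
      · calc a j < ((2:ℝ)^k)⁻¹ := by linarith [(hab j).2.2]
          _ ≤ v (ω i j) := hvpos _
      · calc v (ω i j) ≤ 1 - ((2:ℝ)^k)⁻¹ := hvle _
          _ < b j := by linarith [(hab j).1]
end

section
/- Let m ∈ ℕ, s ∈ {0,1,...,2^m - 1}^d and p ∈ {1/2^m,...,1 - 1/2^m}^d with Ω_m(s,p) nonempty. If z is uniformly distributed in M_m^d, then P(z ∈ B_m(s,p)) ≥ 2^{-(m+4)}, where B_m(s,p) = ∏_{ℓ=1}^d [p_ℓ, p_ℓ + (s_ℓ - 1)/2^m]. -/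
/-- `Ω_m(s,p)` is nonempty. -/
def OmegaNonempty (m d : ℕ) (s : Fin d → ℕ) (p : Fin d → ℝ) : Prop :=
  ∃ a b : Fin d → ℝ,
    (∀ ℓ, 0 ≤ a ℓ ∧ a ℓ ≤ b ℓ ∧ b ℓ ≤ 1) ∧
    ((2 : ℝ) ^ m)⁻¹ < ∏ ℓ, (b ℓ - a ℓ) ∧
    ∀ ℓ, (s ℓ : ℝ) / 2 ^ m < b ℓ - a ℓ ∧ b ℓ - a ℓ ≤ ((s ℓ : ℝ) + 1) / 2 ^ m ∧
      p ℓ - ((2 : ℝ) ^ m)⁻¹ ≤ a ℓ ∧ a ℓ < p ℓ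

lemma sum_le_prod_add' {ι : Type*} (s : Finset ι) (u : ι → ℝ)
    (h : ∀ i ∈ s, 1 ≤ u i) :
    ∑ i ∈ s, u i ≤ ∏ i ∈ s, u i + ((s.card : ℝ) - 1) := by
  induction s using Finset.cons_induction with
  | empty => simp
  | cons a s ha ih =>
    have h1 : 1 ≤ u a := h a (Finset.mem_cons_self a s)
    have h2 : ∀ i ∈ s, 1 ≤ u i := fun i hi => h i (Finset.mem_cons_of_mem hi)
    have hP : (1:ℝ) ≤ ∏ i ∈ s, u i := by
      calc (1:ℝ) = ∏ i ∈ s, 1 := by simp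
      _ ≤ ∏ i ∈ s, u i := Finset.prod_le_prod (by intros; norm_num) (fun i hi => h2 i hi)
    have hih := ih h2
    simp only [Finset.sum_cons, Finset.prod_cons, Finset.card_cons]
    push_cast
    nlinarith [mul_nonneg (sub_nonneg.2 h1) (sub_nonneg.2 hP)]

lemma card_filter_Icc' (N i j : ℕ) (hj : j < N) :
    (Finset.filter (fun z : Fin N => i ≤ z.val ∧ z.val ≤ j) Finset.univ).card = j + 1 - i := by
  rw [← Finset.card_image_of_injective _ Fin.val_injective]
  have himg : Finset.image Fin.val
      (Finset.filter (fun z : Fin N => i ≤ z.val ∧ z.val ≤ j) Finset.univ)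
      = Finset.Icc i j := by
    ext n
    simp only [Finset.mem_image, Finset.mem_filter, Finset.mem_univ, true_and, Finset.mem_Icc]
    constructor
    · rintro ⟨z, hz, rfl⟩; exact hz
    · rintro ⟨h1, h2⟩; exact ⟨⟨n, lt_of_le_of_lt h2 hj⟩, ⟨h1, h2⟩, rfl⟩
  rw [himg, Nat.card_Icc]

lemma exp_two_le' : Real.exp 2 ≤ 16 := by
  have h := Real.exp_one_lt_d9
  have h2 : Real.exp 2 = Real.exp 1 * Real.exp 1 := by rw [← Real.exp_add]; norm_num
  nlinarith [Real.exp_pos 1]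


/-- Lemma of Ullrich–Vybíral: for `(s,p) ∈ 𝕀_m`, a uniformly random `z ∈ M_m^d` lies in
`B_m(s,p) = ∏_ℓ [p_ℓ, p_ℓ + (s_ℓ-1)/2^m]` with probability at least `2^{-(m+4)}`.
Stated via counting: `#{z ∈ M_m^d : z ∈ B_m(s,p)} ≥ 2^{-(m+4)}·(2^m-1)^d`. -/
theorem stmt_15 (m d : ℕ) (hm : 1 ≤ m) (hd : 1 ≤ d)
    (s : Fin d → ℕ) (hs : ∀ ℓ, s ℓ ≤ 2 ^ m - 1)
    (p : Fin d → ℝ) (hp : ∀ ℓ, p ℓ ∈ Mgrid m)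
    (hΩ : OmegaNonempty m d s p) :
    ((2 : ℝ) ^ (m + 4))⁻¹ * ((2 : ℝ) ^ m - 1) ^ d ≤
      ((@Finset.filter (Fin d → Fin (2 ^ m))
          (fun z => (∀ ℓ, 1 ≤ (z ℓ : ℕ)) ∧
            ∀ ℓ, p ℓ ≤ ((z ℓ : ℕ) : ℝ) / 2 ^ m ∧
              ((z ℓ : ℕ) : ℝ) / 2 ^ m ≤ p ℓ + ((s ℓ : ℝ) - 1) / 2 ^ m)
          (Classical.decPred _) Finset.univ).card : ℝ) := by
  obtain ⟨a, b, hab, hprod, hsp⟩ := hΩ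
  simp only [Mgrid, Set.mem_setOf_eq] at hp
  choose i hi1 hi2 hip using hp
  set Nr : ℝ := (2:ℝ) ^ m with hNr
  have hd1 : d - 1 + 1 = d := by omega
  have hNrpos : (0:ℝ) < Nr := by positivity
  have hNr2 : (2:ℝ) ≤ Nr := by
    calc (2:ℝ) = 2 ^ 1 := by norm_num
    _ ≤ 2 ^ m := by exact pow_le_pow_right₀ (by norm_num) hm
  have hcastN : ((2 ^ m : ℕ) : ℝ) = Nr := by push_cast; rfl
  have hba_nonneg : ∀ ℓ, 0 ≤ b ℓ - a ℓ := fun ℓ =>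
    le_of_lt (lt_of_le_of_lt (by positivity) (hsp ℓ).1)
  -- s ℓ ≥ 1
  have hs1 : ∀ ℓ, 1 ≤ s ℓ := by
    intro ℓ
    by_contra h
    have hsℓ : s ℓ = 0 := by omega
    have hle : ∏ j, (b j - a j) ≤ ∏ j, (if j = ℓ then Nr⁻¹ else 1) := by
      apply Finset.prod_le_prod (fun j _ => hba_nonneg j)
      intro j _
      by_cases hj : j = ℓ
      · rw [if_pos hj]
        subst hj
        have h2 := (hsp j).2.1
        rw [hsℓ] at h2
        norm_num at h2
        linarith
      · rw [if_neg hj]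
        linarith [(hab j).1, (hab j).2.1, (hab j).2.2]
    rw [Finset.prod_ite_eq' Finset.univ ℓ (fun _ => Nr⁻¹)] at hle
    rw [if_pos (Finset.mem_univ ℓ)] at hle
    exact absurd (lt_of_lt_of_le hprod hle) (lt_irrefl _)
  -- s ℓ + 1 ≤ 2^m
  have hub : ∀ ℓ, (s ℓ : ℝ) + 1 ≤ Nr := by
    intro ℓ
    have h1 : s ℓ + 1 ≤ 2 ^ m := by have := hs ℓ; have : 1 ≤ 2 ^ m := Nat.one_le_two_pow; omega
    calc (s ℓ : ℝ) + 1 = ((s ℓ + 1 : ℕ) : ℝ) := by push_cast; ring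
    _ ≤ ((2 ^ m : ℕ) : ℝ) := by exact_mod_cast h1
    _ = Nr := hcastN
  -- i ℓ + s ℓ ≤ 2^m
  have hiN : ∀ ℓ, i ℓ + s ℓ ≤ 2 ^ m := by
    intro ℓ
    have h1 : ((i ℓ : ℝ) - 1) / Nr ≤ a ℓ := by
      have h0 := (hsp ℓ).2.2.1
      rw [hip ℓ] at h0
      rw [sub_div, inv_eq_one_div] at *
      linarith
    have h2 : a ℓ + (s ℓ : ℝ) / Nr < b ℓ := by
      have := (hsp ℓ).1; linarith
    have h3 : b ℓ ≤ 1 := (hab ℓ).2.2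
    have h5 : (i ℓ : ℝ) + s ℓ < Nr + 1 := by
      have hd1 : ((i ℓ:ℝ) - 1)/Nr * Nr = (i ℓ:ℝ) - 1 := by field_simp
      have hd2 : (s ℓ:ℝ)/Nr * Nr = (s ℓ:ℝ) := by field_simp
      nlinarith [mul_le_mul_of_nonneg_right h1 (le_of_lt hNrpos)]
    have h6 : i ℓ + s ℓ < 2 ^ m + 1 := by
      have : ((i ℓ + s ℓ : ℕ) : ℝ) < ((2 ^ m + 1 : ℕ) : ℝ) := by
        push_cast
        rw [← hcastN] at h5
        push_cast at h5
        linarith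
      exact_mod_cast this
    omega
  -- counting
  have hcount : (@Finset.filter (Fin d → Fin (2 ^ m))
          (fun z => (∀ ℓ, 1 ≤ (z ℓ : ℕ)) ∧
            ∀ ℓ, p ℓ ≤ ((z ℓ : ℕ) : ℝ) / 2 ^ m ∧
              ((z ℓ : ℕ) : ℝ) / 2 ^ m ≤ p ℓ + ((s ℓ : ℝ) - 1) / 2 ^ m)
          (Classical.decPred _) Finset.univ).card = ∏ ℓ, s ℓ := by
    classical
    have hset : (@Finset.filter (Fin d → Fin (2 ^ m))
          (fun z => (∀ ℓ, 1 ≤ (z ℓ : ℕ)) ∧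
            ∀ ℓ, p ℓ ≤ ((z ℓ : ℕ) : ℝ) / 2 ^ m ∧
              ((z ℓ : ℕ) : ℝ) / 2 ^ m ≤ p ℓ + ((s ℓ : ℝ) - 1) / 2 ^ m)
          (Classical.decPred _) Finset.univ) =
        Fintype.piFinset (fun ℓ => Finset.filter
          (fun z : Fin (2 ^ m) => i ℓ ≤ z.val ∧ z.val ≤ i ℓ + s ℓ - 1) Finset.univ) := by
      ext z
      simp only [Finset.mem_filter, Finset.mem_univ, true_and, Fintype.mem_piFinset]
      have hequiv : ∀ ℓ, (p ℓ ≤ ((z ℓ : ℕ) : ℝ) / 2 ^ m ∧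
          ((z ℓ : ℕ) : ℝ) / 2 ^ m ≤ p ℓ + ((s ℓ : ℝ) - 1) / 2 ^ m) ↔
          (i ℓ ≤ (z ℓ : ℕ) ∧ (z ℓ : ℕ) ≤ i ℓ + s ℓ - 1) := by
        intro ℓ
        rw [hip ℓ]
        have hL : (i ℓ : ℝ) / Nr ≤ ((z ℓ : ℕ) : ℝ) / Nr ↔ (i ℓ : ℝ) ≤ ((z ℓ : ℕ) : ℝ) :=
          div_le_div_iff_of_pos_right hNrpos
        have hsum : (i ℓ : ℝ) / Nr + ((s ℓ : ℝ) - 1) / Nr = (((i ℓ + s ℓ - 1 : ℕ)) : ℝ) / Nr := by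
          rw [← add_div]
          congr 1
          have := hs1 ℓ
          push_cast [Nat.cast_sub (by omega : 1 ≤ i ℓ + s ℓ)]
          ring
        constructor
        · rintro ⟨hl, hr⟩
          constructor
          · exact_mod_cast hL.mp hl
          · rw [hsum] at hr
            have := (div_le_div_iff_of_pos_right hNrpos).mp hr
            exact_mod_cast this
        · rintro ⟨hl, hr⟩
          constructor
          · exact hL.mpr (by exact_mod_cast hl)
          · rw [hsum]
            exact (div_le_div_iff_of_pos_right hNrpos).mpr (by exact_mod_cast hr)
      constructor
      · rintro ⟨h1, h2⟩ ℓ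
        exact (hequiv ℓ).mp (h2 ℓ)
      · intro h
        refine ⟨fun ℓ => ?_, fun ℓ => (hequiv ℓ).mpr (h ℓ)⟩
        have := (h ℓ).1
        have := hi1 ℓ
        omega
    rw [hset, Fintype.card_piFinset]
    apply Finset.prod_congr rfl
    intro ℓ _
    rw [card_filter_Icc' (2^m) (i ℓ) (i ℓ + s ℓ - 1)
      (by have := hiN ℓ; have := hs1 ℓ; omega)]
    have := hs1 ℓ; have := hi1 ℓ; omega
  rw [hcount]
  push_cast
  -- analytic part
  have hs1r : ∀ ℓ, (1:ℝ) ≤ (s ℓ : ℝ) := fun ℓ => by exact_mod_cast hs1 ℓ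
  -- product lower bound on ∏ (s+1)
  have h2 : Nr⁻¹ < (∏ ℓ, ((s ℓ:ℝ) + 1)) / Nr ^ d := by
    have hle : ∏ ℓ, (b ℓ - a ℓ) ≤ ∏ ℓ, (((s ℓ:ℝ) + 1) / Nr) :=
      Finset.prod_le_prod (fun ℓ _ => hba_nonneg ℓ) (fun ℓ _ => (hsp ℓ).2.1)
    rw [Finset.prod_div_distrib, Finset.prod_const, Finset.card_univ, Fintype.card_fin] at hle
    exact lt_of_lt_of_le hprod hle
  have hprodpos : (0:ℝ) < ∏ ℓ, ((s ℓ:ℝ) + 1) := by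
    apply Finset.prod_pos
    intro ℓ _
    have := hs1r ℓ; linarith
  have hprodS : Nr ^ (d-1) < ∏ ℓ, ((s ℓ:ℝ) + 1) := by
    rw [inv_eq_one_div, div_lt_div_iff₀ hNrpos (by positivity)] at h2
    rw [one_mul] at h2
    have hNd : Nr ^ d = Nr ^ (d-1) * Nr := by rw [← pow_succ, hd1]
    rw [hNd] at h2
    exact lt_of_mul_lt_mul_right h2 (le_of_lt hNrpos)
  set u : Fin d → ℝ := fun ℓ => Nr / ((s ℓ:ℝ) + 1) with hu
  have hspos : ∀ ℓ, (0:ℝ) < (s ℓ:ℝ) + 1 := fun ℓ => by have := hs1r ℓ; linarith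
  have hu1 : ∀ ℓ, 1 ≤ u ℓ := fun ℓ => (one_le_div (hspos ℓ)).mpr (hub ℓ)
  have huprod : ∏ ℓ, u ℓ < Nr := by
    simp only [hu]
    rw [Finset.prod_div_distrib, Finset.prod_const, Finset.card_univ, Fintype.card_fin,
      div_lt_iff₀ hprodpos]
    calc Nr ^ d = Nr ^ (d-1) * Nr := by rw [← pow_succ, hd1]
    _ < (∏ ℓ, ((s ℓ:ℝ) + 1)) * Nr := mul_lt_mul_of_pos_right hprodS hNrpos
    _ = Nr * ∏ ℓ, ((s ℓ:ℝ) + 1) := mul_comm _ _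
  have hSu : ∑ ℓ, u ℓ ≤ Nr + (d:ℝ) - 1 := by
    have h := sum_le_prod_add' Finset.univ u (fun ℓ _ => hu1 ℓ)
    rw [Finset.card_univ, Fintype.card_fin] at h
    linarith [huprod]
  have hkey : ∀ ℓ, (Nr - 1) * ((s ℓ:ℝ) + 1) ≤ (1 + 2*(u ℓ - 1)/Nr) * (Nr * (s ℓ:ℝ)) := by
    intro ℓ
    have ht1 := hs1r ℓ
    have hpos := hspos ℓ
    have hutn : u ℓ * ((s ℓ:ℝ) + 1) = Nr := by
      simp only [hu]
      field_simp
    have hrhs : (1 + 2*(u ℓ - 1)/Nr) * (Nr * (s ℓ:ℝ)) =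
        Nr * (s ℓ:ℝ) + 2*(u ℓ - 1)*(s ℓ:ℝ) := by
      field_simp
    rw [hrhs]
    nlinarith [mul_nonneg (sub_nonneg.2 (hu1 ℓ)) (sub_nonneg.2 ht1), hutn]
  have hnn : ∀ ℓ, (0:ℝ) ≤ (Nr - 1) * ((s ℓ:ℝ) + 1) := fun ℓ =>
    mul_nonneg (by linarith) (by linarith [hs1r ℓ])
  have hstep : ∏ ℓ, ((Nr-1) * ((s ℓ:ℝ)+1)) ≤ ∏ ℓ, ((1 + 2*(u ℓ-1)/Nr) * (Nr * (s ℓ:ℝ))) :=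
    Finset.prod_le_prod (fun ℓ _ => hnn ℓ) (fun ℓ _ => hkey ℓ)
  simp only [Finset.prod_mul_distrib, Finset.prod_const, Finset.card_univ,
    Fintype.card_fin] at hstep
  have hexp : ∏ ℓ, (1 + 2*(u ℓ-1)/Nr) ≤ 16 := by
    have e1 : ∀ ℓ, 1 + 2*(u ℓ-1)/Nr ≤ Real.exp (2*(u ℓ-1)/Nr) := by
      intro ℓ
      have := Real.add_one_le_exp (2*(u ℓ-1)/Nr)
      linarith
    have e0 : ∀ ℓ, (0:ℝ) ≤ 1 + 2*(u ℓ-1)/Nr := by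
      intro ℓ
      have h1 : (0:ℝ) ≤ 2*(u ℓ-1)/Nr := by
        apply div_nonneg _ (le_of_lt hNrpos)
        have := hu1 ℓ; linarith
      linarith
    calc ∏ ℓ, (1 + 2*(u ℓ-1)/Nr)
        ≤ ∏ ℓ, Real.exp (2*(u ℓ-1)/Nr) :=
          Finset.prod_le_prod (fun ℓ _ => e0 ℓ) (fun ℓ _ => e1 ℓ)
      _ = Real.exp (∑ ℓ, 2*(u ℓ-1)/Nr) := by rw [Real.exp_sum]
      _ ≤ Real.exp 2 := by
          rw [Real.exp_le_exp]
          have hsum : ∑ ℓ, 2*(u ℓ-1)/Nr = 2*((∑ ℓ, u ℓ) - (d:ℝ))/Nr := by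
            rw [← Finset.sum_div, ← Finset.mul_sum]
            congr 2
            rw [Finset.sum_sub_distrib, Finset.sum_const, Finset.card_univ,
              Fintype.card_fin, nsmul_eq_mul, mul_one]
          rw [hsum, div_le_iff₀ hNrpos]
          nlinarith [hSu]
      _ ≤ 16 := exp_two_le'
  have hsprodpos : (0:ℝ) < ∏ ℓ, (s ℓ : ℝ) := by
    apply Finset.prod_pos
    intro ℓ _
    linarith [hs1r ℓ]
  have hpowpos : (0:ℝ) < Nr^(d-1) := pow_pos hNrpos _
  have hfinal : (Nr-1)^d * Nr^(d-1) ≤ 16 * (Nr^d * ∏ ℓ, (s ℓ:ℝ)) := by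
    calc (Nr-1)^d * Nr^(d-1) ≤ (Nr-1)^d * ∏ ℓ, ((s ℓ:ℝ)+1) :=
          mul_le_mul_of_nonneg_left (le_of_lt hprodS) (pow_nonneg (by linarith) _)
    _ ≤ (∏ ℓ, (1 + 2*(u ℓ-1)/Nr)) * (Nr^d * ∏ ℓ, (s ℓ:ℝ)) := hstep
    _ ≤ 16 * (Nr^d * ∏ ℓ, (s ℓ:ℝ)) := by
        apply mul_le_mul_of_nonneg_right hexp
        positivity
  have hgoal2 : (Nr-1)^d ≤ 16 * Nr * ∏ ℓ, (s ℓ:ℝ) := by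
    have hNd : Nr ^ d = Nr^(d-1) * Nr := by rw [← pow_succ, hd1]
    have h' : (Nr-1)^d * Nr^(d-1) ≤ (16 * Nr * ∏ ℓ, (s ℓ:ℝ)) * Nr^(d-1) := by
      calc (Nr-1)^d * Nr^(d-1) ≤ 16 * (Nr^d * ∏ ℓ, (s ℓ:ℝ)) := hfinal
      _ = (16 * Nr * ∏ ℓ, (s ℓ:ℝ)) * Nr^(d-1) := by rw [hNd]; ring
    exact le_of_mul_le_mul_right h' hpowpos
  have h16N : (2:ℝ)^(m+4) = Nr * 16 := by rw [pow_add, hNr]; norm_num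
  rw [h16N, inv_mul_le_iff₀ (by positivity)]
  calc ((2:ℝ)^m - 1)^d ≤ 16 * Nr * ∏ ℓ, (s ℓ:ℝ) := hgoal2
  _ = Nr * 16 * ∏ ℓ, (s ℓ:ℝ) := by ring
end
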